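/- arXiv:2210.08639 — 4 statements merged into one kernel-verified Lean document; each statement's English description precedes it below -/
import Mathlib

section
/- Fan's inequality: for all real κ ≥ −1 and all λ ∈ [0, 1), exp(λκ + κ²(λ + log(1 − λ))) ≤ 1 + λκ. -/
open Real Set

noncomputable def gfun (x : ℝ) : ℝ := (Real.log (1 + x) - x) / x ^ 2

noncomputable def mfun (x : ℝ) : ℝ := 2 * x - x ^ 2 / (1 + x) - 2 * Real.log (1 + x)

lemma hasDerivAt_log1p {x : ℝ} (hx : -1 < x) :
    HasDerivAt (fun y : ℝ => Real.log (1 + y)) (1 + x)⁻¹ x := by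
  have h1 : (1 : ℝ) + x ≠ 0 := by linarith
  have := (Real.hasDerivAt_log h1).comp x ((hasDerivAt_id x).const_add 1)
  exact this.congr_deriv (by simp)

lemma hfun_mono : MonotoneOn (fun x : ℝ => Real.log (1 + x) - x + x ^ 2 / 2) (Ioi (-1)) := by
  have hd : ∀ x ∈ Ioi (-1 : ℝ),
      HasDerivAt (fun x : ℝ => Real.log (1 + x) - x + x ^ 2 / 2)
        ((1 + x)⁻¹ - 1 + x) x := by
    intro x hx
    have h1 := (hasDerivAt_log1p hx).sub (hasDerivAt_id x)
    have h2 : HasDerivAt (fun y : ℝ => y ^ 2 / 2) x x := by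
      simpa using (hasDerivAt_pow 2 x).div_const 2
    exact h1.add h2
  apply monotoneOn_of_deriv_nonneg (convex_Ioi _)
  · exact fun x hx => (hd x hx).continuousAt.continuousWithinAt
  · intro x hx
    rw [interior_Ioi] at hx
    exact (hd x hx).differentiableAt.differentiableWithinAt
  · intro x hx
    rw [interior_Ioi] at hx
    have hx' : (0 : ℝ) < 1 + x := by
      have := mem_Ioi.mp hx; linarith
    rw [(hd x hx).deriv]
    have : (1 + x)⁻¹ - 1 + x = x ^ 2 / (1 + x) := by
      field_simp
      ring
    rw [this]
    positivity

lemma log1p_le {x : ℝ} (hx : -1 < x) (hx0 : x ≤ 0) :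
    Real.log (1 + x) ≤ x - x ^ 2 / 2 := by
  have := hfun_mono (mem_Ioi.mpr hx) (mem_Ioi.mpr (by norm_num : (-1:ℝ) < 0)) hx0
  simp at this
  linarith

lemma le_log1p {x : ℝ} (hx0 : 0 ≤ x) :
    x - x ^ 2 / 2 ≤ Real.log (1 + x) := by
  have := hfun_mono (mem_Ioi.mpr (by norm_num : (-1:ℝ) < 0)) (mem_Ioi.mpr (by linarith : (-1:ℝ) < x)) hx0
  simp at this
  linarith

lemma hasDerivAt_mfun {x : ℝ} (hx : -1 < x) :
    HasDerivAt mfun (x ^ 2 / (1 + x) ^ 2) x := by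
  have h1 : (1 : ℝ) + x ≠ 0 := by linarith
  have hden : HasDerivAt (fun y : ℝ => 1 + y) 1 x := (hasDerivAt_id x).const_add 1
  have hnum : HasDerivAt (fun y : ℝ => y ^ 2) (2 * x) x := by simpa using hasDerivAt_pow 2 x
  have hdiv := hnum.div hden h1
  have hlin : HasDerivAt (fun y : ℝ => 2 * y) 2 x := by
    simpa using (hasDerivAt_id x).const_mul 2
  have hlog : HasDerivAt (fun y : ℝ => 2 * Real.log (1 + y)) (2 * (1 + x)⁻¹) x :=
    (hasDerivAt_log1p hx).const_mul 2
  have := (hlin.sub hdiv).sub hlog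
  refine this.congr_deriv ?_
  field_simp
  ring

lemma mfun_zero : mfun 0 = 0 := by simp [mfun]

lemma mfun_mono_neg : MonotoneOn mfun (Ioc (-1 : ℝ) 0) := by
  apply monotoneOn_of_deriv_nonneg (convex_Ioc _ _)
  · exact fun x hx => (hasDerivAt_mfun hx.1).continuousAt.continuousWithinAt
  · intro x hx
    rw [interior_Ioc] at hx
    exact (hasDerivAt_mfun hx.1).differentiableAt.differentiableWithinAt
  · intro x hx
    rw [interior_Ioc] at hx
    rw [(hasDerivAt_mfun hx.1).deriv]
    positivity

lemma mfun_mono_pos : MonotoneOn mfun (Ici (0 : ℝ)) := by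
  apply monotoneOn_of_deriv_nonneg (convex_Ici _)
  · exact fun x hx => (hasDerivAt_mfun (by simp at hx; linarith)).continuousAt.continuousWithinAt
  · intro x hx
    rw [interior_Ici] at hx
    exact (hasDerivAt_mfun (by simp at hx; linarith)).differentiableAt.differentiableWithinAt
  · intro x hx
    rw [interior_Ici] at hx
    rw [(hasDerivAt_mfun (by simp at hx; linarith)).deriv]
    positivity

lemma mfun_nonpos {x : ℝ} (h1 : -1 < x) (h2 : x ≤ 0) : mfun x ≤ 0 := by
  have := mfun_mono_neg (mem_Ioc.mpr ⟨h1, h2⟩) (mem_Ioc.mpr ⟨by norm_num, le_refl 0⟩) h2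
  simpa [mfun_zero] using this

lemma mfun_nonneg {x : ℝ} (h2 : 0 ≤ x) : 0 ≤ mfun x := by
  have := mfun_mono_pos (mem_Ici.mpr (le_refl 0)) (mem_Ici.mpr h2) h2
  simpa [mfun_zero] using this

lemma hasDerivAt_gfun {x : ℝ} (h1 : -1 < x) (h0 : x ≠ 0) :
    HasDerivAt gfun (x * mfun x / x ^ 4) x := by
  have h1' : (1 : ℝ) + x ≠ 0 := by linarith
  have hu := (hasDerivAt_log1p h1).sub (hasDerivAt_id x)
  have hv : HasDerivAt (fun y : ℝ => y ^ 2) (2 * x) x := by simpa using hasDerivAt_pow 2 x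
  have := hu.div hv (pow_ne_zero 2 h0)
  refine this.congr_deriv ?_
  rw [mfun]
  field_simp
  simp only [Pi.sub_apply, id]
  ring

lemma gfun_mono_neg : MonotoneOn gfun (Ioo (-1 : ℝ) 0) := by
  apply monotoneOn_of_deriv_nonneg (convex_Ioo _ _)
  · exact fun x hx => (hasDerivAt_gfun hx.1 (ne_of_lt hx.2)).continuousAt.continuousWithinAt
  · intro x hx
    rw [interior_Ioo] at hx
    exact (hasDerivAt_gfun hx.1 (ne_of_lt hx.2)).differentiableAt.differentiableWithinAt
  · intro x hx
    rw [interior_Ioo] at hx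
    rw [(hasDerivAt_gfun hx.1 (ne_of_lt hx.2)).deriv]
    have hm : mfun x ≤ 0 := mfun_nonpos hx.1 (le_of_lt hx.2)
    have hx0 : x ≠ 0 := ne_of_lt hx.2
    have hx4 : (0:ℝ) < x ^ 4 := by positivity
    have hnum : 0 ≤ x * mfun x :=
      mul_nonneg_iff.mpr (Or.inr ⟨le_of_lt hx.2, hm⟩)
    exact div_nonneg hnum (le_of_lt hx4)

lemma gfun_mono_pos : MonotoneOn gfun (Ioi (0 : ℝ)) := by
  apply monotoneOn_of_deriv_nonneg (convex_Ioi _)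
  · intro x hx
    exact (hasDerivAt_gfun (by simp at hx; linarith) (ne_of_gt hx)).continuousAt.continuousWithinAt
  · intro x hx
    rw [interior_Ioi] at hx
    exact (hasDerivAt_gfun (by simp at hx; linarith) (ne_of_gt hx)).differentiableAt.differentiableWithinAt
  · intro x hx
    rw [interior_Ioi] at hx
    rw [(hasDerivAt_gfun (by simp at hx; linarith) (ne_of_gt hx)).deriv]
    have hm : 0 ≤ mfun x := mfun_nonneg (le_of_lt hx)
    have hx0 : x ≠ 0 := ne_of_gt hx
    have hx4 : (0:ℝ) < x ^ 4 := by positivity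
    exact div_nonneg (mul_nonneg (le_of_lt hx) hm) (le_of_lt hx4)

lemma gfun_le_neg_half {x : ℝ} (h1 : -1 < x) (h2 : x < 0) : gfun x ≤ -(1/2) := by
  have hlog := log1p_le h1 (le_of_lt h2)
  have hx2 : (0:ℝ) < x ^ 2 := by nlinarith
  rw [gfun, div_le_iff₀ hx2]
  nlinarith

lemma neg_half_le_gfun {x : ℝ} (h2 : 0 < x) : -(1/2) ≤ gfun x := by
  have hlog := le_log1p (le_of_lt h2)
  have hx2 : (0:ℝ) < x ^ 2 := by positivity
  rw [gfun, le_div_iff₀ hx2]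
  nlinarith

/-- **Fan's inequality.** For all real `κ ≥ −1` and all `λ ∈ [0, 1)`,
`exp(λκ + κ²(λ + log(1 − λ))) ≤ 1 + λκ`. -/
theorem fan_inequality (κ l : ℝ) (hκ : -1 ≤ κ) (hl0 : 0 ≤ l) (hl1 : l < 1) :
    Real.exp (l * κ + κ ^ 2 * (l + Real.log (1 - l))) ≤ 1 + l * κ := by
  rcases eq_or_lt_of_le hl0 with h0 | hlpos
  · simp [← h0]
  rcases eq_or_ne κ 0 with hk | hk
  · simp [hk]
  have h1l : (0:ℝ) < 1 - l := by linarith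
  have hab : -l ≤ l * κ := by nlinarith
  have hb1 : -1 < l * κ := by linarith
  have h1b : (0:ℝ) < 1 + l * κ := by linarith
  have hbne : l * κ ≠ 0 := mul_ne_zero (ne_of_gt hlpos) hk
  have hma : -1 < -l := by linarith
  have hma0 : -l < 0 := by linarith
  have key : gfun (-l) ≤ gfun (l * κ) := by
    rcases lt_trichotomy (l * κ) 0 with hb | hb | hb
    · exact gfun_mono_neg (mem_Ioo.mpr ⟨hma, hma0⟩) (mem_Ioo.mpr ⟨hb1, hb⟩) hab
    · exact absurd hb hbne
    · exact le_trans (gfun_le_neg_half hma hma0) (neg_half_le_gfun hb)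
  have hexpand : l * κ + κ ^ 2 * (l + Real.log (1 - l)) ≤ Real.log (1 + l * κ) := by
    rw [gfun, gfun] at key
    have he : (1 : ℝ) + -l = 1 - l := by ring
    rw [he] at key
    have hl2 : (0:ℝ) < (-l) ^ 2 := by nlinarith
    have hb2 : (0:ℝ) < (l * κ) ^ 2 := by positivity
    rw [div_le_div_iff₀ hl2 hb2] at key
    have hll : (0:ℝ) < l ^ 2 := by positivity
    nlinarith [key]
  calc Real.exp (l * κ + κ ^ 2 * (l + Real.log (1 - l)))
      ≤ Real.exp (Real.log (1 + l * κ)) := Real.exp_le_exp.mpr hexpand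
    _ = 1 + l * κ := Real.exp_log h1b
end

section
/- If in the design-based setting the IPW estimates satisfy |τ̂_i| ≤ m almost surely for all i, for a constant m > 0, and τ_i := E(τ̂_i | F_{i-1}), then the process M_n = exp( (Σ_{i=1}^n (τ̂_i − τ_i))/(m(m+1)) + (Σ_{i=1}^n τ̂_i²)/m² · (log(m/(m+1)) + 1/(m+1)) ), with M_0 = 1, is a nonnegative supermartingale with respect to (F_n). -/
open MeasureTheory ProbabilityTheory Filter

section AuxIneq
open Real

lemma sm_div_const {α : Type*} {mα : MeasurableSpace α} {f : α → ℝ}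
    (hf : StronglyMeasurable[mα] f) (c : ℝ) :
    StronglyMeasurable[mα] (fun x => f x / c) := by
  simpa [div_eq_mul_inv] using hf.mul_const c⁻¹

lemma aux_log_one_sub {l : ℝ} (h0 : 0 < l) (h1 : l < 1) :
    Real.log (1 - l) + l ≤ -(l ^ 2 / 2) := by
  set G : ℝ → ℝ := fun t => -Real.log (1 - t) - t - t ^ 2 / 2 with hG
  have hD : ∀ t ∈ Set.Icc (0:ℝ) l, HasDerivAt G (1 / (1 - t) - 1 - t) t := by
    intro t ht
    have hne : (1 : ℝ) - t ≠ 0 := by nlinarith [ht.1, ht.2]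
    have h1' : HasDerivAt (fun t : ℝ => 1 - t) (-1) t := by
      simpa using (hasDerivAt_id t).const_sub 1
    have hlog : HasDerivAt (fun t : ℝ => Real.log (1 - t)) ((1 - t)⁻¹ * (-1)) t :=
      (Real.hasDerivAt_log hne).comp t h1'
    have h2 := ((hlog.neg.sub (hasDerivAt_id t)).sub
      (((hasDerivAt_pow 2 t)).div_const 2))
    have heq : (1:ℝ) / (1 - t) - 1 - t = -((1 - t)⁻¹ * (-1:ℝ)) - 1 - (2:ℕ) * t ^ (2 - 1) / 2 := by
      push_cast
      norm_num
    rw [heq]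
    exact h2
  have hmono : MonotoneOn G (Set.Icc 0 l) := by
    apply monotoneOn_of_deriv_nonneg (convex_Icc 0 l)
    · exact fun t ht => (hD t ht).continuousAt.continuousWithinAt
    · rw [interior_Icc]
      exact fun t ht => ((hD t (Set.mem_Icc_of_Ioo ht)).differentiableAt).differentiableWithinAt
    · rw [interior_Icc]
      intro t ht
      rw [(hD t (Set.mem_Icc_of_Ioo ht)).deriv]
      have h1t : 0 < 1 - t := by nlinarith [ht.2]
      have heq : (1:ℝ) / (1 - t) - 1 - t = t ^ 2 / (1 - t) := by
        field_simp; ring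
      rw [heq]; positivity
  have hfin := hmono (Set.left_mem_Icc.2 h0.le) (Set.right_mem_Icc.2 h0.le) h0.le
  simp only [hG, sub_zero, Real.log_one, neg_zero] at hfin
  nlinarith [hfin]

lemma aux_F_nonneg {l c v : ℝ} (h0 : 0 < l) (h1 : l < 1)
    (hc : c = (Real.log (1 - l) + l) / l ^ 2) (hv : v ∈ Set.Icc (-l) l) :
    0 ≤ Real.log (1 + v) - v - c * v ^ 2 := by
  have hc2 : c ≤ -(1/2) := by
    rw [hc, div_le_iff₀ (by positivity)]
    nlinarith [aux_log_one_sub h0 h1]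
  set F : ℝ → ℝ := fun t => Real.log (1 + t) - t - c * t ^ 2 with hF
  have hD : ∀ t ∈ Set.Icc (-l) l, HasDerivAt F (1 / (1 + t) - 1 - 2 * c * t) t := by
    intro t ht
    have hne : (1 : ℝ) + t ≠ 0 := by nlinarith [ht.1, ht.2]
    have h1' : HasDerivAt (fun t : ℝ => 1 + t) 1 t := by
      simpa using (hasDerivAt_id t).const_add 1
    have hlog : HasDerivAt (fun t : ℝ => Real.log (1 + t)) ((1 + t)⁻¹ * 1) t :=
      (Real.hasDerivAt_log hne).comp t h1'
    have h2 := (hlog.sub (hasDerivAt_id t)).sub ((hasDerivAt_pow 2 t).const_mul c)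
    have heq : (1:ℝ) / (1 + t) - 1 - 2 * c * t
        = (1 + t)⁻¹ * 1 - 1 - c * ((2:ℕ) * t ^ (2 - 1)) := by
      push_cast; ring_nf
    rw [heq]
    exact h2
  -- F(-l) = 0 and F(0) = 0
  have hFl : F (-l) = 0 := by
    have hl2 : c * l ^ 2 = Real.log (1 - l) + l := by
      rw [hc]; field_simp
    simp only [hF]
    rw [show (1:ℝ) + -l = 1 - l by ring]
    linear_combination -hl2
  have hF0 : F 0 = 0 := by simp [hF]
  have key : 0 ≤ F v := by
    rcases le_or_gt 0 v with hv0 | hv0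
    · -- monotone on [0, l]
      have hmono : MonotoneOn F (Set.Icc 0 l) := by
        apply monotoneOn_of_deriv_nonneg (convex_Icc 0 l)
        · intro t ht
          exact (hD t ⟨by linarith [ht.1], ht.2⟩).continuousAt.continuousWithinAt
        · rw [interior_Icc]
          exact fun t ht => ((hD t ⟨by linarith [ht.1], ht.2.le⟩).differentiableAt).differentiableWithinAt
        · rw [interior_Icc]
          intro t ht
          rw [(hD t ⟨by linarith [ht.1], ht.2.le⟩).deriv]
          have h1t : 0 < 1 + t := by linarith [ht.1]
          have e1 : (1:ℝ) / (1 + t) - 1 = -t / (1 + t) := by field_simp; ring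
          have e2 : -t / (1 + t) ≥ -t := by
            rw [ge_iff_le, le_div_iff₀ h1t]
            nlinarith [ht.1]
          nlinarith [ht.1]
      have := hmono (Set.left_mem_Icc.2 (by linarith)) ⟨hv0, hv.2⟩ hv0
      rw [hF0] at this; exact this
    · -- v < 0
      rcases le_or_gt 0 (1 / (1 + v) + 2 * c) with hh | hh
      · -- monotone on [-l, v]
        have hmono : MonotoneOn F (Set.Icc (-l) v) := by
          apply monotoneOn_of_deriv_nonneg (convex_Icc (-l) v)
          · intro t ht
            exact (hD t ⟨ht.1, le_trans ht.2 hv.2⟩).continuousAt.continuousWithinAt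
          · rw [interior_Icc]
            exact fun t ht => ((hD t ⟨ht.1.le, le_trans ht.2.le hv.2⟩).differentiableAt).differentiableWithinAt
          · rw [interior_Icc]
            intro t ht
            rw [(hD t ⟨ht.1.le, le_trans ht.2.le hv.2⟩).deriv]
            have h1t : 0 < 1 + t := by nlinarith [ht.1, hv.1]
            have h1v : 0 < 1 + v := by nlinarith [hv.1]
            have hmono2 : 1 / (1 + v) ≤ 1 / (1 + t) :=
              one_div_le_one_div_of_le h1t (by linarith [ht.2])
            have hpos : 0 ≤ 1 / (1 + t) + 2 * c := by linarith
            have ht0 : t < 0 := lt_trans ht.2 hv0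
            have e : 1 / (1 + t) - 1 - 2 * c * t = -t * (1 / (1 + t) + 2 * c) := by
              field_simp; ring
            rw [e]
            exact mul_nonneg (by linarith) hpos
        have := hmono (Set.left_mem_Icc.2 (by linarith [hv.1])) ⟨hv.1, le_refl v⟩ hv.1
        rw [hFl] at this; exact this
      · -- antitone on [v, 0]
        have hanti : AntitoneOn F (Set.Icc v 0) := by
          apply antitoneOn_of_deriv_nonpos (convex_Icc v 0)
          · intro t ht
            exact (hD t ⟨le_trans hv.1 ht.1, by linarith [ht.2, h0]⟩).continuousAt.continuousWithinAt
          · rw [interior_Icc]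
            exact fun t ht => ((hD t ⟨le_trans hv.1 ht.1.le, by linarith [ht.2, h0]⟩).differentiableAt).differentiableWithinAt
          · rw [interior_Icc]
            intro t ht
            rw [(hD t ⟨le_trans hv.1 ht.1.le, by linarith [ht.2, h0]⟩).deriv]
            have h1v : 0 < 1 + v := by nlinarith [hv.1]
            have h1t : 0 < 1 + t := by linarith [ht.1]
            have hmono2 : 1 / (1 + t) ≤ 1 / (1 + v) :=
              one_div_le_one_div_of_le h1v (by linarith [ht.1])
            have hneg : 1 / (1 + t) + 2 * c ≤ 0 := by linarith
            have ht0 : t < 0 := ht.2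
            have e : 1 / (1 + t) - 1 - 2 * c * t = -t * (1 / (1 + t) + 2 * c) := by
              field_simp; ring
            rw [e]
            exact mul_nonpos_of_nonneg_of_nonpos (by linarith) hneg
        have := hanti ⟨le_refl v, hv0.le⟩ (Set.right_mem_Icc.2 hv0.le) hv0.le
        rw [hF0] at this; exact this
  simpa [hF] using key

lemma key_ineq {l u : ℝ} (h0 : 0 < l) (h1 : l < 1) (hu : |u| ≤ 1) :
    Real.exp (l * u + u ^ 2 * (Real.log (1 - l) + l)) ≤ 1 + l * u := by
  have hu1 := abs_le.1 hu
  have hv : l * u ∈ Set.Icc (-l) l := by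
    constructor <;> nlinarith [hu1.1, hu1.2]
  have hF := aux_F_nonneg h0 h1 rfl hv
  have h1v : 0 < 1 + l * u := by nlinarith [hv.1]
  have harg : l * u + u ^ 2 * (Real.log (1 - l) + l) ≤ Real.log (1 + l * u) := by
    have e : (Real.log (1 - l) + l) / l ^ 2 * (l * u) ^ 2
        = u ^ 2 * (Real.log (1 - l) + l) := by
      field_simp
    nlinarith [hF, e]
  calc Real.exp (l * u + u ^ 2 * (Real.log (1 - l) + l))
      ≤ Real.exp (Real.log (1 + l * u)) := Real.exp_le_exp.2 harg
    _ = 1 + l * u := Real.exp_log h1v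

lemma key_ineq' {m x : ℝ} (hm : 0 < m) (hx : |x| ≤ m) :
    Real.exp (x / (m * (m + 1)) + x ^ 2 / m ^ 2 * (Real.log (m / (m + 1)) + 1 / (m + 1)))
      ≤ 1 + x / (m * (m + 1)) := by
  have hm1 : (0:ℝ) < m + 1 := by linarith
  have h0 : (0:ℝ) < 1 / (m + 1) := by positivity
  have h1 : 1 / (m + 1) < 1 := by
    rw [div_lt_one hm1]; linarith
  have hu : |x / m| ≤ 1 := by
    rw [abs_div, abs_of_pos hm, div_le_one hm]
    exact hx
  have h := key_ineq h0 h1 hu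
  have e1 : (1:ℝ) - 1 / (m + 1) = m / (m + 1) := by field_simp; ring
  have e2 : 1 / (m + 1) * (x / m) = x / (m * (m + 1)) := by
    rw [div_mul_div_comm, one_mul, mul_comm (m + 1) m]
  have e3 : (x / m) ^ 2 = x ^ 2 / m ^ 2 := by rw [div_pow]
  rw [e1, e2, e3] at h
  exact h

end AuxIneq


/-- If in the design-based setting the IPW estimates satisfy
`|τ̂_i| ≤ m` a.s. for all `i`, for a constant `m > 0`, and `τ_i := E(τ̂_i | F_{i-1})`,
then `M_n = exp((Σ_{i=1}^n (τ̂_i − τ_i))/(m(m+1)) + (Σ_{i=1}^n τ̂_i²)/m² ·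
(log(m/(m+1)) + 1/(m+1)))`, with `M_0 = 1`, is a nonnegative supermartingale w.r.t.
`(F_n)`. -/
theorem exp_process_supermartingale
    {Ω : Type*} {m0 : MeasurableSpace Ω} {μ : Measure Ω} [IsProbabilityMeasure μ]
    (ℱ : Filtration ℕ m0)
    (τhat τ : ℕ → Ω → ℝ) (m : ℝ) (hm : 0 < m)
    -- `(τ̂_i)` is `(F_i)`-adapted and a.s. bounded by `m`
    (hadapted : ∀ i, StronglyMeasurable[ℱ i] (τhat i))
    (hbdd : ∀ i, ∀ᵐ ω ∂μ, |τhat i ω| ≤ m)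
    (hint : ∀ i, Integrable (τhat i) μ)
    -- `τ_i = E(τ̂_i | F_{i-1})`
    (hτmeas : ∀ i, 1 ≤ i → StronglyMeasurable[ℱ (i - 1)] (τ i))
    (hτ : ∀ i, 1 ≤ i → τ i =ᵐ[μ] μ[τhat i | ℱ (i - 1)]) :
    Supermartingale
      (fun n ω => Real.exp
        ((∑ i ∈ Finset.Icc 1 n, (τhat i ω - τ i ω)) / (m * (m + 1)) +
          (∑ i ∈ Finset.Icc 1 n, (τhat i ω) ^ 2) / m ^ 2 *
            (Real.log (m / (m + 1)) + 1 / (m + 1))))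
      ℱ μ ∧
    (∀ n ω, 0 ≤ Real.exp
        ((∑ i ∈ Finset.Icc 1 n, (τhat i ω - τ i ω)) / (m * (m + 1)) +
          (∑ i ∈ Finset.Icc 1 n, (τhat i ω) ^ 2) / m ^ 2 *
            (Real.log (m / (m + 1)) + 1 / (m + 1)))) ∧
    (∀ ω : Ω, Real.exp
        ((∑ i ∈ Finset.Icc 1 0, (τhat i ω - τ i ω)) / (m * (m + 1)) +
          (∑ i ∈ Finset.Icc 1 0, (τhat i ω) ^ 2) / m ^ 2 *
            (Real.log (m / (m + 1)) + 1 / (m + 1))) = 1) := by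
  have hq : (0:ℝ) < m * (m + 1) := by nlinarith
  have hm2 : (0:ℝ) < m ^ 2 := by positivity
  set C : ℝ := Real.log (m / (m + 1)) + 1 / (m + 1) with hC
  set S : ℕ → Ω → ℝ := fun n ω =>
    (∑ i ∈ Finset.Icc 1 n, (τhat i ω - τ i ω)) / (m * (m + 1)) +
      (∑ i ∈ Finset.Icc 1 n, (τhat i ω) ^ 2) / m ^ 2 * C with hSdef
  refine ⟨?_, fun n ω => (Real.exp_pos _).le, fun ω => by norm_num⟩
  show Supermartingale (fun n ω => Real.exp (S n ω)) ℱ μ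
  -- measurability of S n w.r.t. ℱ n
  have hSmeas : ∀ n, StronglyMeasurable[ℱ n] (S n) := by
    intro n
    apply StronglyMeasurable.add
    · apply sm_div_const
      apply Finset.stronglyMeasurable_fun_sum
      intro i hi
      rcases Finset.mem_Icc.1 hi with ⟨hi1, hi2⟩
      exact ((hadapted i).mono (ℱ.mono hi2)).sub
        ((hτmeas i hi1).mono (ℱ.mono (le_trans (Nat.sub_le i 1) hi2)))
    · apply StronglyMeasurable.mul_const
      apply sm_div_const
      apply Finset.stronglyMeasurable_fun_sum
      intro i hi
      rcases Finset.mem_Icc.1 hi with ⟨hi1, hi2⟩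
      exact ((hadapted i).mono (ℱ.mono hi2)).pow 2
  have hMadp : StronglyAdapted ℱ (fun n ω => Real.exp (S n ω)) := fun n =>
    Real.continuous_exp.comp_stronglyMeasurable (hSmeas n)
  -- a.e. bounds
  have hbdd_all : ∀ᵐ ω ∂μ, ∀ i, |τhat i ω| ≤ m := ae_all_iff.2 hbdd
  have hτbdd_all : ∀ᵐ ω ∂μ, ∀ i, 1 ≤ i → |τ i ω| ≤ m := by
    rw [ae_all_iff]
    intro i
    by_cases hi : 1 ≤ i
    · have h1 : ∀ᵐ x ∂μ, |τhat i x| ≤ ((⟨m, hm.le⟩ : NNReal) : ℝ) := hbdd i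
      have h2 := ae_bdd_condExp_of_ae_bdd (m := ℱ (i - 1)) h1
      filter_upwards [h2, hτ i hi] with ω hω heq
      intro _
      rw [heq]
      exact hω
    · exact Eventually.of_forall fun ω hi' => absurd hi' hi
  -- a.e. bound for S n
  have hSb : ∀ n, ∀ᵐ ω ∂μ, |S n ω| ≤ (n * (2 * m)) / (m * (m + 1)) + (n * m ^ 2) / m ^ 2 * |C| := by
    intro n
    filter_upwards [hbdd_all, hτbdd_all] with ω h1 h2
    have hs1 : |∑ i ∈ Finset.Icc 1 n, (τhat i ω - τ i ω)| ≤ n * (2 * m) := by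
      calc |∑ i ∈ Finset.Icc 1 n, (τhat i ω - τ i ω)|
          ≤ ∑ i ∈ Finset.Icc 1 n, |τhat i ω - τ i ω| := Finset.abs_sum_le_sum_abs _ _
        _ ≤ ∑ i ∈ Finset.Icc 1 n, (2 * m) := by
            apply Finset.sum_le_sum
            intro i hi
            rcases Finset.mem_Icc.1 hi with ⟨hi1, _⟩
            calc |τhat i ω - τ i ω| ≤ |τhat i ω| + |τ i ω| := abs_sub _ _
              _ ≤ 2 * m := by linarith [h1 i, h2 i hi1]
        _ = n * (2 * m) := by
            rw [Finset.sum_const, Nat.card_Icc]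
            simp [nsmul_eq_mul]
    have hs2 : |∑ i ∈ Finset.Icc 1 n, (τhat i ω) ^ 2| ≤ n * m ^ 2 := by
      calc |∑ i ∈ Finset.Icc 1 n, (τhat i ω) ^ 2|
          ≤ ∑ i ∈ Finset.Icc 1 n, |(τhat i ω) ^ 2| := Finset.abs_sum_le_sum_abs _ _
        _ ≤ ∑ i ∈ Finset.Icc 1 n, m ^ 2 := by
            apply Finset.sum_le_sum
            intro i hi
            rw [abs_of_nonneg (sq_nonneg _)]
            exact sq_le_sq' (abs_le.1 (h1 i)).1 (abs_le.1 (h1 i)).2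
        _ = n * m ^ 2 := by
            rw [Finset.sum_const, Nat.card_Icc]
            simp [nsmul_eq_mul]
    calc |S n ω| ≤ |(∑ i ∈ Finset.Icc 1 n, (τhat i ω - τ i ω)) / (m * (m + 1))| +
          |(∑ i ∈ Finset.Icc 1 n, (τhat i ω) ^ 2) / m ^ 2 * C| := abs_add_le _ _
      _ = |∑ i ∈ Finset.Icc 1 n, (τhat i ω - τ i ω)| / (m * (m + 1)) +
          |∑ i ∈ Finset.Icc 1 n, (τhat i ω) ^ 2| / m ^ 2 * |C| := by
            rw [abs_mul, abs_div, abs_div, abs_of_pos hq, abs_of_pos hm2]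
      _ ≤ (n * (2 * m)) / (m * (m + 1)) + (n * m ^ 2) / m ^ 2 * |C| := by gcongr
  -- integrability
  have hMint : ∀ n, Integrable (fun ω => Real.exp (S n ω)) μ := by
    intro n
    refine Integrable.mono' (integrable_const
      (Real.exp ((n * (2 * m)) / (m * (m + 1)) + (n * m ^ 2) / m ^ 2 * |C|)))
      ((hMadp n).mono (ℱ.le n)).aestronglyMeasurable ?_
    filter_upwards [hSb n] with ω h
    rw [Real.norm_eq_abs, abs_of_pos (Real.exp_pos _)]
    exact Real.exp_le_exp.2 (le_trans (le_abs_self _) h)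
  refine supermartingale_nat hMadp hMint ?_
  intro n
  set A : Ω → ℝ := fun ω => Real.exp (S n ω - τ (n + 1) ω / (m * (m + 1))) with hA
  set Bf : Ω → ℝ := fun ω =>
    Real.exp (τhat (n + 1) ω / (m * (m + 1)) + (τhat (n + 1) ω) ^ 2 / m ^ 2 * C) with hBf
  have hAB : (fun ω => Real.exp (S (n + 1) ω)) = A * Bf := by
    funext ω
    simp only [hA, hBf, Pi.mul_apply, ← Real.exp_add]
    congr 1
    simp only [hSdef]
    rw [Finset.sum_Icc_succ_top (by omega : 1 ≤ n + 1),
      Finset.sum_Icc_succ_top (by omega : 1 ≤ n + 1)]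
    ring
  have hτn : StronglyMeasurable[ℱ n] (τ (n + 1)) := hτmeas (n + 1) (by omega)
  have hA_meas : StronglyMeasurable[ℱ n] A :=
    Real.continuous_exp.comp_stronglyMeasurable
      ((hSmeas n).sub (sm_div_const hτn _))
  have hBf_meas : StronglyMeasurable[ℱ (n + 1)] Bf :=
    Real.continuous_exp.comp_stronglyMeasurable
      ((sm_div_const (hadapted (n + 1)) _).add
        ((sm_div_const ((hadapted (n + 1)).pow 2) _).mul_const _))
  have hBint : Integrable Bf μ := by
    refine Integrable.mono' (integrable_const
      (Real.exp (m / (m * (m + 1)) + m ^ 2 / m ^ 2 * |C|)))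
      (hBf_meas.mono (ℱ.le (n + 1))).aestronglyMeasurable ?_
    filter_upwards [hbdd (n + 1)] with ω h
    rw [Real.norm_eq_abs, abs_of_pos (Real.exp_pos _)]
    apply Real.exp_le_exp.2
    have hsq : (τhat (n + 1) ω) ^ 2 ≤ m ^ 2 := by
      nlinarith [abs_nonneg (τhat (n + 1) ω), sq_abs (τhat (n + 1) ω)]
    have e1 : τhat (n + 1) ω / (m * (m + 1)) ≤ m / (m * (m + 1)) := by
      gcongr
      exact (abs_le.1 h).2
    have e2 : (τhat (n + 1) ω) ^ 2 / m ^ 2 * C ≤ m ^ 2 / m ^ 2 * |C| := by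
      calc (τhat (n + 1) ω) ^ 2 / m ^ 2 * C ≤ (τhat (n + 1) ω) ^ 2 / m ^ 2 * |C| :=
            mul_le_mul_of_nonneg_left (le_abs_self C) (by positivity)
        _ ≤ m ^ 2 / m ^ 2 * |C| := by gcongr
    linarith
  have hABint : Integrable (A * Bf) μ := hAB ▸ hMint (n + 1)
  -- conditional expectation computations
  have h1 : μ[fun ω => Real.exp (S (n + 1) ω) | ℱ n] =ᵐ[μ] A * μ[Bf | ℱ n] := by
    rw [hAB]
    exact condExp_mul_of_stronglyMeasurable_left hA_meas hABint hBint
  set g : Ω → ℝ := fun ω => 1 + τhat (n + 1) ω / (m * (m + 1)) with hg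
  have hgint : Integrable g μ := (integrable_const (1:ℝ)).add ((hint (n + 1)).div_const _)
  have h2 : Bf ≤ᵐ[μ] g := by
    filter_upwards [hbdd (n + 1)] with ω h
    exact key_ineq' hm h
  have h3 : μ[Bf | ℱ n] ≤ᵐ[μ] μ[g | ℱ n] := condExp_mono hBint hgint h2
  have h4 : μ[g | ℱ n] =ᵐ[μ] fun ω => 1 + τ (n + 1) ω / (m * (m + 1)) := by
    have e : g = (fun _ => (1:ℝ)) + (m * (m + 1))⁻¹ • (τhat (n + 1)) := by
      funext ω
      simp [hg, div_eq_inv_mul, smul_eq_mul]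
    rw [e]
    calc μ[(fun _ => (1:ℝ)) + (m * (m + 1))⁻¹ • (τhat (n + 1)) | ℱ n]
        =ᵐ[μ] μ[fun _ => (1:ℝ) | ℱ n] + μ[(m * (m + 1))⁻¹ • (τhat (n + 1)) | ℱ n] :=
          condExp_add (integrable_const 1) ((hint (n + 1)).smul _) _
      _ =ᵐ[μ] fun ω => 1 + τ (n + 1) ω / (m * (m + 1)) := by
          have hsmul := condExp_smul (μ := μ) (m := ℱ n) ((m * (m + 1))⁻¹ : ℝ) (τhat (n + 1))
          have hτe : μ[τhat (n + 1) | ℱ n] =ᵐ[μ] τ (n + 1) := (hτ (n + 1) (by omega)).symm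
          rw [condExp_const (ℱ.le n)]
          filter_upwards [hsmul, hτe] with ω hω hτω
          simp only [Pi.add_apply, Pi.smul_apply, smul_eq_mul] at *
          rw [hω, hτω]
          ring
  have h5 : A * μ[Bf | ℱ n] ≤ᵐ[μ] fun ω => Real.exp (S n ω) := by
    filter_upwards [h3, h4] with ω hb hgω
    have step1 : A ω * (μ[Bf | ℱ n]) ω ≤ A ω * (1 + τ (n + 1) ω / (m * (m + 1))) := by
      apply mul_le_mul_of_nonneg_left _ (Real.exp_pos _).le
      rw [← hgω]
      exact hb
    have step2 : A ω * (1 + τ (n + 1) ω / (m * (m + 1)))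
        ≤ A ω * Real.exp (τ (n + 1) ω / (m * (m + 1))) := by
      apply mul_le_mul_of_nonneg_left _ (Real.exp_pos _).le
      linarith [Real.add_one_le_exp (τ (n + 1) ω / (m * (m + 1)))]
    have step3 : A ω * Real.exp (τ (n + 1) ω / (m * (m + 1))) = Real.exp (S n ω) := by
      simp only [hA, ← Real.exp_add]
      congr 1
      ring
    calc (A * μ[Bf | ℱ n]) ω = A ω * (μ[Bf | ℱ n]) ω := rfl
      _ ≤ Real.exp (S n ω) := by linarith
  exact h1.le.trans h5
end

section
/- One-sided exact design-based bound: if in the design-based setting |τ̂_i| ≤ m almost surely for all i, with constant m > 0, τ_i := E(τ̂_i | F_{i-1}), and S_n := Σ_{i=1}^n τ̂_i², then for any α̃ ∈ (0,1), P( ∃ n ≥ 1 : Σ_{i=1}^n (τ̂_i − τ_i) ≥ m(m+1)·log(1/α̃) + S_n·( ((m+1)/m)·log(1 + 1/m) − 1/m ) ) ≤ α̃. -/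
open MeasureTheory ProbabilityTheory Filter

section AuxAnalysis

open Real

lemma aux_log1 {l : ℝ} (h0 : 0 < l) (h1 : l < 1) :
    l + l ^ 2 / 2 ≤ -Real.log (1 - l) := by
  set F : ℝ → ℝ := fun t => -Real.log (1 - t) - t - t ^ 2 / 2 with hF
  have hcont : ContinuousOn F (Set.Icc 0 l) := by
    refine ContinuousOn.sub (ContinuousOn.sub (ContinuousOn.neg ?_) continuousOn_id) ?_
    · exact ((continuous_const.sub continuous_id).continuousOn).log
        (fun t ht => by rcases ht with ⟨ht0, htl⟩; simp; intro h; nlinarith)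
    · exact (continuous_pow 2).continuousOn.div_const 2
  have hmono : StrictMonoOn F (Set.Icc 0 l) := by
    refine strictMonoOn_of_deriv_pos (convex_Icc 0 l) hcont ?_
    intro t ht
    rw [interior_Icc] at ht
    have ht0 : 0 < t := ht.1
    have ht1 : (0:ℝ) < 1 - t := by have := ht.2; linarith
    have hd : HasDerivAt F (-((-1) / (1 - t)) - 1 - (↑2 * t ^ 1 / 2)) t := by
      have h1 : HasDerivAt (fun t : ℝ => 1 - t) (-1) t := by
        simpa using (hasDerivAt_id t).const_sub 1
      have h2 : HasDerivAt (fun t : ℝ => Real.log (1 - t)) ((-1) / (1 - t)) t :=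
        h1.log (by linarith)
      have h3 : HasDerivAt (fun t : ℝ => t ^ 2 / 2) (↑2 * t ^ 1 / 2) t :=
        (hasDerivAt_pow 2 t).div_const 2
      exact ((h2.neg.sub (hasDerivAt_id t)).sub h3 :)
    rw [hd.deriv]
    have heq : -((-1) / (1 - t)) - 1 - (↑2 * t ^ 1 / 2) = t ^ 2 / (1 - t) := by
      field_simp; ring
    rw [heq]
    exact div_pos (by positivity) ht1
  have h := hmono (Set.left_mem_Icc.2 h0.le) (Set.right_mem_Icc.2 h0.le) h0
  simp only [hF] at h
  simp at h
  nlinarith [h]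

lemma aux_log2 {l : ℝ} (h0 : 0 < l) (h1 : l < 1) :
    2 * (-Real.log (1 - l) - l) * (1 - l) ≤ l ^ 2 := by
  set K : ℝ → ℝ := fun t => t ^ 2 - 2 * (1 - t) * (-Real.log (1 - t) - t) with hK
  have hcont : ContinuousOn K (Set.Icc 0 l) := by
    refine ContinuousOn.sub ((continuous_pow 2).continuousOn) ?_
    refine ContinuousOn.mul ?_ ?_
    · exact (continuous_const.mul (continuous_const.sub continuous_id)).continuousOn
    · refine ContinuousOn.sub (ContinuousOn.neg ?_) continuousOn_id
      exact ((continuous_const.sub continuous_id).continuousOn).log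
        (fun t ht => by rcases ht with ⟨ht0, htl⟩; simp; intro h; nlinarith)
  have hmono : StrictMonoOn K (Set.Icc 0 l) := by
    refine strictMonoOn_of_deriv_pos (convex_Icc 0 l) hcont ?_
    intro t ht
    rw [interior_Icc] at ht
    have ht0 : 0 < t := ht.1
    have ht1 : (0:ℝ) < 1 - t := by have := ht.2; linarith
    have h1 : HasDerivAt (fun t : ℝ => 1 - t) (-1) t := by
      simpa using (hasDerivAt_id t).const_sub 1
    have h2 : HasDerivAt (fun t : ℝ => Real.log (1 - t)) ((-1) / (1 - t)) t :=
      h1.log (by linarith)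
    have h3 : HasDerivAt (fun t : ℝ => -Real.log (1 - t) - t) (-((-1) / (1 - t)) - 1) t :=
      h2.neg.sub (hasDerivAt_id t)
    have h4 : HasDerivAt (fun t : ℝ => 2 * (1 - t)) (2 * (-1)) t := h1.const_mul 2
    have hd : HasDerivAt K (↑2 * t ^ 1 - (2 * (-1) * (-Real.log (1 - t) - t)
        + 2 * (1 - t) * (-((-1) / (1 - t)) - 1))) t :=
      (hasDerivAt_pow 2 t).sub (h4.mul h3)
    rw [hd.deriv]
    have heq : ↑2 * t ^ 1 - (2 * (-1) * (-Real.log (1 - t) - t)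
        + 2 * (1 - t) * (-((-1) / (1 - t)) - 1)) = 2 * (-Real.log (1 - t) - t) := by
      field_simp; ring
    rw [heq]
    have hlt : Real.log (1 - t) < (1 - t) - 1 :=
      Real.log_lt_sub_one_of_pos ht1 (by intro h; linarith)
    linarith
  have h := hmono (Set.left_mem_Icc.2 h0.le) (Set.right_mem_Icc.2 h0.le) h0
  simp only [hK] at h
  simp at h
  nlinarith [h]

lemma key_log {l : ℝ} (h0 : 0 < l) (h1 : l < 1) {u : ℝ} (hu : -l ≤ u) :
    u - ((-Real.log (1 - l) - l) / l ^ 2) * u ^ 2 ≤ Real.log (1 + u) := by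
  set ψ := -Real.log (1 - l) - l with hψdef
  set c := ψ / l ^ 2 with hcdef
  have hl2 : (0:ℝ) < l ^ 2 := by positivity
  have hψ : l ^ 2 / 2 ≤ ψ := by have := aux_log1 h0 h1; rw [hψdef]; linarith
  have hc2 : 1 ≤ 2 * c := by
    rw [hcdef, show (2:ℝ) * (ψ / l ^ 2) = 2 * ψ / l ^ 2 from by ring, le_div_iff₀ hl2]
    linarith
  have hc0 : 0 < c := by linarith
  have h2c0 : (0:ℝ) < 2 * c := by linarith
  have h2cl : 2 * c * (1 - l) ≤ 1 := by
    have h := aux_log2 h0 h1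
    have e : 2 * c * (1 - l) = 2 * ψ * (1 - l) / l ^ 2 := by rw [hcdef]; ring
    rw [e, div_le_one hl2]; nlinarith [h]
  set u₀ : ℝ := 1 / (2 * c) - 1 with hu₀def
  have h2cu : 2 * c * (1 + u₀) = 1 := by rw [hu₀def]; field_simp; ring
  have hu₀0 : u₀ ≤ 0 := by
    rw [hu₀def]
    have : 1 / (2 * c) ≤ 1 := by rw [div_le_one h2c0]; linarith
    linarith
  have hu₀l : -l ≤ u₀ := by
    rw [hu₀def]
    have : 1 - l ≤ 1 / (2 * c) := by rw [le_div_iff₀ h2c0]; nlinarith [h2cl]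
    linarith
  set g : ℝ → ℝ := fun t => Real.log (1 + t) - t + c * t ^ 2 with hg
  have hgl : g (-l) = 0 := by
    have h1l : (1:ℝ) + -l = 1 - l := by ring
    have hcl : c * (-l) ^ 2 = ψ := by rw [hcdef]; field_simp
    simp only [hg, h1l, hcl, hψdef]; ring
  have hg0 : g 0 = 0 := by simp [hg]
  have hderiv : ∀ t : ℝ, -1 < t → HasDerivAt g (1 / (1 + t) - 1 + c * (2 * t)) t := by
    intro t ht
    have h1t : HasDerivAt (fun t : ℝ => 1 + t) 1 t := by
      simpa using (hasDerivAt_id t).const_add 1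
    have h2 : HasDerivAt (fun t : ℝ => Real.log (1 + t)) (1 / (1 + t)) t :=
      h1t.log (by linarith)
    have h3 : HasDerivAt (fun t : ℝ => c * t ^ 2) (c * (↑2 * t ^ 1)) t :=
      (hasDerivAt_pow 2 t).const_mul c
    have := (h2.sub (hasDerivAt_id t)).add h3
    have e : 1 / (1 + t) - 1 + c * (2 * t) = 1 / (1 + t) - 1 + c * (↑2 * t ^ 1) := by
      push_cast; ring
    rw [e]; exact this
  have hcont : ContinuousOn g (Set.Ici (-l)) := by
    refine ContinuousOn.add (ContinuousOn.sub ?_ continuousOn_id) ?_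
    · exact ((continuous_const.add continuous_id).continuousOn).log
        (fun t ht => by simp only [Set.mem_Ici] at ht; intro h; simp only [Pi.add_apply, id_eq] at h; nlinarith)
    · exact (continuous_const.mul (continuous_pow 2)).continuousOn
  have hmono1 : StrictMonoOn g (Set.Icc (-l) u₀) := by
    refine strictMonoOn_of_deriv_pos (convex_Icc _ _) (hcont.mono Set.Icc_subset_Ici_self) ?_
    intro t ht
    rw [interior_Icc] at ht
    have ht1 : -1 < t := by have := ht.1; linarith
    have h1t : (0:ℝ) < 1 + t := by linarith
    rw [(hderiv t ht1).deriv]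
    have e : 1 / (1 + t) - 1 + c * (2 * t) = (-t) * (1 - 2 * c * (1 + t)) / (1 + t) := by
      field_simp; ring
    rw [e]
    have htneg : t < 0 := lt_of_lt_of_le ht.2 hu₀0
    have : 2 * c * (1 + t) < 1 := by nlinarith [ht.2, h2cu, h2c0]
    exact div_pos (mul_pos (by linarith) (by linarith)) h1t
  have hmono2 : StrictAntiOn g (Set.Icc u₀ 0) := by
    refine strictAntiOn_of_deriv_neg (convex_Icc _ _) (hcont.mono ?_) ?_
    · exact fun t ht => le_trans hu₀l ht.1
    intro t ht
    rw [interior_Icc] at ht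
    have ht1 : -1 < t := by have := ht.1; nlinarith
    have h1t : (0:ℝ) < 1 + t := by linarith
    rw [(hderiv t ht1).deriv]
    have e : 1 / (1 + t) - 1 + c * (2 * t) = t * (2 * c * (1 + t) - 1) / (1 + t) := by
      field_simp; ring
    rw [e]
    have : 1 < 2 * c * (1 + t) := by nlinarith [ht.1, h2cu, h2c0]
    have htneg : t < 0 := ht.2
    exact div_neg_of_neg_of_pos (mul_neg_of_neg_of_pos htneg (by linarith)) h1t
  have hmono3 : ∀ v : ℝ, StrictMonoOn g (Set.Icc 0 v) := by
    intro v
    refine strictMonoOn_of_deriv_pos (convex_Icc _ _) (hcont.mono ?_) ?_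
    · exact fun t ht => le_trans (by linarith) ht.1
    intro t ht
    rw [interior_Icc] at ht
    have ht0 : 0 < t := ht.1
    have h1t : (0:ℝ) < 1 + t := by linarith
    rw [(hderiv t (by linarith)).deriv]
    have e : 1 / (1 + t) - 1 + c * (2 * t) = t * (2 * c * (1 + t) - 1) / (1 + t) := by
      field_simp; ring
    rw [e]
    have : 1 < 2 * c * (1 + t) := by nlinarith
    exact div_pos (mul_pos ht0 (by linarith)) h1t
  have hgnonneg : 0 ≤ g u := by
    rcases le_or_gt u u₀ with h | h
    · have := (hmono1.monotoneOn) (Set.mem_Icc.2 ⟨le_refl _, hu₀l⟩)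
        (Set.mem_Icc.2 ⟨hu, h⟩) hu
      rw [hgl] at this; exact this
    rcases le_or_gt u 0 with h' | h'
    · have := (hmono2.antitoneOn) (Set.mem_Icc.2 ⟨h.le, h'⟩)
        (Set.mem_Icc.2 ⟨hu₀0, le_refl _⟩) h'
      rw [hg0] at this; exact this
    · have := ((hmono3 u).monotoneOn) (Set.mem_Icc.2 ⟨le_refl _, h'.le⟩)
        (Set.mem_Icc.2 ⟨h'.le, le_refl _⟩) h'.le
      rw [hg0] at this; exact this
  have e : g u = Real.log (1 + u) - u + c * u ^ 2 := rfl
  rw [e] at hgnonneg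
  linarith

lemma key_exp {l : ℝ} (h0 : 0 < l) (h1 : l < 1) {x : ℝ} (hx : -1 ≤ x) :
    Real.exp (l * x - (-Real.log (1 - l) - l) * x ^ 2) ≤ 1 + l * x := by
  have hu : -l ≤ l * x := by nlinarith
  have hpos : (0:ℝ) < 1 + l * x := by nlinarith
  have h := key_log h0 h1 hu
  have e : l * x - ((-Real.log (1 - l) - l) / l ^ 2) * (l * x) ^ 2
      = l * x - (-Real.log (1 - l) - l) * x ^ 2 := by
    field_simp
  rw [e] at h
  calc Real.exp (l * x - (-Real.log (1 - l) - l) * x ^ 2)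
      ≤ Real.exp (Real.log (1 + l * x)) := Real.exp_le_exp.2 h
    _ = 1 + l * x := Real.exp_log hpos

lemma g_bound {l ψ m a b : ℝ} (hm : 0 < m) (hl : 0 ≤ l) (ha : |a| ≤ m) (hb : |b| ≤ m) :
    l / m * (a - b) - ψ / m ^ 2 * a ^ 2 ≤ 2 * l + |ψ| := by
  have h1 := abs_le.mp ha
  have h2 := abs_le.mp hb
  have hm2 : (0:ℝ) < m ^ 2 := by positivity
  have e : l / m * (a - b) - ψ / m ^ 2 * a ^ 2 = (l * m * (a - b) - ψ * a ^ 2) / m ^ 2 := by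
    field_simp
  rw [e, div_le_iff₀ hm2]
  nlinarith [mul_nonneg (mul_nonneg hl hm.le) (show (0:ℝ) ≤ 2 * m - (a - b) by linarith),
    mul_nonneg (by linarith [neg_abs_le ψ] : (0:ℝ) ≤ |ψ| + ψ) (sq_nonneg a),
    mul_nonneg (abs_nonneg ψ) (show (0:ℝ) ≤ m ^ 2 - a ^ 2 by nlinarith)]

end AuxAnalysis

lemma ville_ineq {Ω : Type*} {m0 : MeasurableSpace Ω} {μ : Measure Ω} [IsProbabilityMeasure μ]
    {ℱ : Filtration ℕ m0} {f : ℕ → Ω → ℝ} (hf : Supermartingale f ℱ μ)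
    (hpos : ∀ n ω, 0 ≤ f n ω) (hf0 : ∀ ω, f 0 ω ≤ 1) {c : ℝ} (hc : 0 < c) :
    μ {ω | ∃ n, c ≤ f n ω} ≤ ENNReal.ofReal (1 / c) := by
  set A : ℕ → Set Ω := fun n => {ω | ∃ k ≤ n, c ≤ f k ω} with hA
  have hsub : {ω | ∃ n, c ≤ f n ω} ⊆ ⋃ n, A n := by
    rintro ω ⟨n, hn⟩; exact Set.mem_iUnion.2 ⟨n, n, le_refl n, hn⟩
  have hAmeas : ∀ n, MeasurableSet (A n) := by
    intro n
    have : A n = ⋃ k, ⋃ _ : k ≤ n, {ω | c ≤ f k ω} := by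
      ext ω; simp [hA]
    rw [this]
    refine MeasurableSet.iUnion fun k => MeasurableSet.iUnion fun _ => ?_
    exact measurableSet_le measurable_const
      ((hf.stronglyAdapted k).measurable.mono (ℱ.le k) le_rfl)
  have hAn : ∀ n, μ (A n) ≤ ENNReal.ofReal (1 / c) := by
    intro n
    set τ : Ω → WithTop ℕ := fun ω => (hittingBtwn f (Set.Ici c) 0 n ω : ℕ) with hτdef
    have hst : IsStoppingTime ℱ τ := Adapted.isStoppingTime_hittingBtwn hf.stronglyAdapted.adapted measurableSet_Ici
    have hτle : ∀ ω, τ ω ≤ n := fun ω => WithTop.coe_le_coe.2 (hittingBtwn_le (u := f) (s := Set.Ici c) (n := 0) (m := n) ω)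
    have hsint : Integrable (stoppedValue f τ) μ :=
      integrable_stoppedValue ℕ hst hf.integrable hτle
    have hneg := hf.neg.expected_stoppedValue_mono (isStoppingTime_const ℱ 0) hst
      (fun ω => WithTop.coe_le_coe.2 (Nat.zero_le _)) hτle
    have hsv0 : stoppedValue (-f) (fun _ => (WithTop.some (0:ℕ) : WithTop ℕ)) = -f 0 := rfl
    have hsvτ : stoppedValue (-f) τ = -stoppedValue f τ := rfl
    rw [hsv0, hsvτ] at hneg
    simp only [Pi.neg_apply] at hneg
    rw [integral_neg, integral_neg, neg_le_neg_iff] at hneg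
    have hint1 : μ[stoppedValue f τ] ≤ 1 := by
      refine le_trans hneg ?_
      calc μ[f 0] ≤ ∫ _, (1:ℝ) ∂μ := integral_mono (hf.integrable 0) (integrable_const 1)
            (fun ω => hf0 ω)
        _ = 1 := by simp
    have hge : ∀ ω ∈ A n, c ≤ stoppedValue f τ ω := by
      rintro ω ⟨k, hk, hck⟩
      exact stoppedValue_hittingBtwn_mem ⟨k, ⟨Nat.zero_le _, hk⟩, hck⟩
    have h1 : c * (μ (A n)).toReal ≤ ∫ ω in A n, stoppedValue f τ ω ∂μ :=
      by
        have h := setIntegral_ge_of_const_le (hAmeas n) (measure_ne_top μ _) hge hsint.integrableOn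
        rw [smul_eq_mul, mul_comm] at h; exact h
    have h2 : ∫ ω in A n, stoppedValue f τ ω ∂μ ≤ μ[stoppedValue f τ] :=
      setIntegral_le_integral hsint (Filter.Eventually.of_forall fun ω => hpos _ ω)
    have h3 : (μ (A n)).toReal ≤ 1 / c := by
      rw [le_div_iff₀ hc]; nlinarith [h1, h2, hint1]
    rw [← ENNReal.ofReal_toReal (measure_ne_top μ (A n))]
    exact ENNReal.ofReal_le_ofReal h3
  calc μ {ω | ∃ n, c ≤ f n ω} ≤ μ (⋃ n, A n) := measure_mono hsub
    _ = ⨆ n, μ (A n) := by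
        refine Monotone.measure_iUnion ?_
        intro a b hab ω
        rintro ⟨k, hk, hck⟩; exact ⟨k, le_trans hk hab, hck⟩
    _ ≤ ENNReal.ofReal (1 / c) := iSup_le hAn


/-- **one-sided exact design-based bound.** If `|τ̂_i| ≤ m` a.s.,
`m > 0`, `τ_i := E(τ̂_i | F_{i-1})` and `S_n := Σ_{i=1}^n τ̂_i²`, then for any
`α̃ ∈ (0,1)`,
`P(∃ n ≥ 1 : Σ_{i=1}^n (τ̂_i − τ_i) ≥ m(m+1)·log(1/α̃)
  + S_n·(((m+1)/m)·log(1 + 1/m) − 1/m)) ≤ α̃`. -/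
theorem one_sided_exact_design_based_bound
    {Ω : Type*} {m0 : MeasurableSpace Ω} {μ : Measure Ω} [IsProbabilityMeasure μ]
    (ℱ : Filtration ℕ m0)
    (τhat τ : ℕ → Ω → ℝ) (m : ℝ) (hm : 0 < m)
    -- `(τ̂_i)` is `(F_i)`-adapted and a.s. bounded by `m`
    (hadapted : ∀ i, StronglyMeasurable[ℱ i] (τhat i))
    (hbdd : ∀ i, ∀ᵐ ω ∂μ, |τhat i ω| ≤ m)
    (hint : ∀ i, Integrable (τhat i) μ)
    -- `τ_i = E(τ̂_i | F_{i-1})`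
    (hτmeas : ∀ i, 1 ≤ i → StronglyMeasurable[ℱ (i - 1)] (τ i))
    (hτ : ∀ i, 1 ≤ i → τ i =ᵐ[μ] μ[τhat i | ℱ (i - 1)])
    (α : ℝ) (hα : α ∈ Set.Ioo (0 : ℝ) 1) :
    μ {ω | ∃ n : ℕ, 1 ≤ n ∧
        m * (m + 1) * Real.log (1 / α) +
          (∑ i ∈ Finset.Icc 1 n, (τhat i ω) ^ 2) *
            ((m + 1) / m * Real.log (1 + 1 / m) - 1 / m)
        ≤ ∑ i ∈ Finset.Icc 1 n, (τhat i ω - τ i ω)} ≤ ENNReal.ofReal α := by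
  obtain ⟨hα0, hα1⟩ := hα
  have hm1 : (0:ℝ) < m + 1 := by linarith
  set l : ℝ := 1 / (m + 1) with hldef
  have h0l : 0 < l := by rw [hldef]; positivity
  have h1l : l < 1 := by rw [hldef, div_lt_one hm1]; linarith
  set ψ : ℝ := -Real.log (1 - l) - l with hψdef
  have hψeq : ψ = Real.log (1 + 1/m) - l := by
    have h1 : (1:ℝ) - l = (1 + 1/m)⁻¹ := by rw [hldef]; field_simp; ring
    rw [hψdef, h1, Real.log_inv, neg_neg]
  set g : ℕ → Ω → ℝ := fun i ω => l/m * (τhat i ω - τ i ω) - ψ/m^2 * (τhat i ω)^2 with hgdef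
  set G : ℕ → Ω → ℝ := fun n ω => ∑ i ∈ Finset.Icc 1 n, g i ω with hGdef
  set f : ℕ → Ω → ℝ := fun n ω => Real.exp (G n ω) with hfdef
  -- a.s. bound on τ
  have hτbdd : ∀ i, 1 ≤ i → ∀ᵐ ω ∂μ, |τ i ω| ≤ m := by
    intro i hi
    have h1 : ∀ᵐ ω ∂μ, |τhat i ω| ≤ ((⟨m, hm.le⟩ : NNReal) : ℝ) := hbdd i
    have h2 := ae_bdd_condExp_of_ae_bdd (m := ℱ (i-1)) h1
    filter_upwards [h2, hτ i hi] with ω hb he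
    rw [he]; exact hb
  have hτint : ∀ i, 1 ≤ i → Integrable (τ i) μ := fun i hi =>
    integrable_condExp.congr (hτ i hi).symm
  -- measurability
  have hGmeas : ∀ n, StronglyMeasurable[ℱ n] (G n) := by
    intro n
    refine Finset.stronglyMeasurable_fun_sum _ fun i hi => ?_
    rcases Finset.mem_Icc.mp hi with ⟨hi1, hin⟩
    have hA : StronglyMeasurable[ℱ n] (τhat i) := (hadapted i).mono (ℱ.mono hin)
    have hB : StronglyMeasurable[ℱ n] (τ i) :=
      (hτmeas i hi1).mono (ℱ.mono (le_trans (Nat.sub_le i 1) hin))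
    exact (stronglyMeasurable_const.mul (hA.sub hB)).sub
      (stronglyMeasurable_const.mul (hA.pow 2))
  have hfmeas : ∀ n, StronglyMeasurable[ℱ n] (f n) := fun n =>
    Real.continuous_exp.comp_stronglyMeasurable (hGmeas n)
  have hfadp : StronglyAdapted ℱ f := fun n => hfmeas n
  -- a.e. boundedness package
  have hae : ∀ᵐ ω ∂μ, ∀ i, |τhat i ω| ≤ m ∧ (1 ≤ i → |τ i ω| ≤ m) := by
    rw [ae_all_iff]
    intro i
    by_cases hi : 1 ≤ i
    · filter_upwards [hbdd i, hτbdd i hi] with ω h1 h2 using ⟨h1, fun _ => h2⟩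
    · filter_upwards [hbdd i] with ω h1 using ⟨h1, fun h => absurd h hi⟩
  -- integrability
  have hfint : ∀ n, Integrable (f n) μ := by
    intro n
    refine Integrable.mono' (integrable_const (Real.exp (n * (2*l + |ψ|))))
      ((hfmeas n).mono (ℱ.le n)).aestronglyMeasurable ?_
    filter_upwards [hae] with ω hω
    show ‖Real.exp (G n ω)‖ ≤ _
    rw [Real.norm_eq_abs, abs_of_pos (Real.exp_pos _), Real.exp_le_exp]
    calc G n ω ≤ ∑ _i ∈ Finset.Icc 1 n, (2*l + |ψ|) := by
          refine Finset.sum_le_sum (fun i hi => ?_)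
          rcases Finset.mem_Icc.mp hi with ⟨hi1, _⟩
          exact g_bound hm h0l.le (hω i).1 ((hω i).2 hi1)
      _ = n * (2*l + |ψ|) := by
          rw [Finset.sum_const, Nat.card_Icc, nsmul_eq_mul]
          norm_num
  -- supermartingale property
  have hstep : ∀ n, μ[f (n+1) | ℱ n] ≤ᵐ[μ] f n := by
    intro n
    have hi1 : (1:ℕ) ≤ n + 1 := Nat.le_add_left 1 n
    have hτm : StronglyMeasurable[ℱ n] (τ (n+1)) := hτmeas (n+1) hi1
    set F : Ω → ℝ := fun ω => f n ω * Real.exp (-(l/m) * τ (n+1) ω) with hFdef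
    set H : Ω → ℝ := fun ω =>
      Real.exp (l/m * τhat (n+1) ω - ψ/m^2 * (τhat (n+1) ω)^2) with hHdef
    have hsplit : f (n+1) = F * H := by
      funext ω
      show Real.exp (G (n+1) ω) = F ω * H ω
      have hsum : G (n+1) ω = G n ω + g (n+1) ω := Finset.sum_Icc_succ_top hi1 _
      show Real.exp (G (n+1) ω)
        = f n ω * Real.exp (-(l/m) * τ (n+1) ω)
          * Real.exp (l/m * τhat (n+1) ω - ψ/m^2 * (τhat (n+1) ω)^2)
      show Real.exp (G (n+1) ω)
        = Real.exp (G n ω) * Real.exp (-(l/m) * τ (n+1) ω)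
          * Real.exp (l/m * τhat (n+1) ω - ψ/m^2 * (τhat (n+1) ω)^2)
      rw [hsum, ← Real.exp_add, ← Real.exp_add]
      congr 1
      show G n ω + (l/m * (τhat (n+1) ω - τ (n+1) ω) - ψ/m^2 * (τhat (n+1) ω)^2) = _
      ring
    have hFmeas : StronglyMeasurable[ℱ n] F :=
      (hfmeas n).mul (Real.continuous_exp.comp_stronglyMeasurable
        (stronglyMeasurable_const.mul hτm))
    have hHint : Integrable H μ := by
      have hA : StronglyMeasurable (τhat (n+1)) := (hadapted (n+1)).mono (ℱ.le (n+1))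
      refine Integrable.mono' (integrable_const (Real.exp (2*l + |ψ|)))
        ((Real.continuous_exp.comp_stronglyMeasurable
          ((stronglyMeasurable_const.mul hA).sub
            (stronglyMeasurable_const.mul (hA.pow 2)))).aestronglyMeasurable) ?_
      filter_upwards [hbdd (n+1)] with ω hb
      show ‖Real.exp (l/m * τhat (n+1) ω - ψ/m^2 * (τhat (n+1) ω)^2)‖ ≤ _
      rw [Real.norm_eq_abs, abs_of_pos (Real.exp_pos _), Real.exp_le_exp]
      have h0 : |(0:ℝ)| ≤ m := by rw [abs_zero]; exact hm.le
      have := g_bound (ψ := ψ) hm h0l.le hb h0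
      simpa using this
    have hFHint : Integrable (F * H) μ := by rw [← hsplit]; exact hfint (n+1)
    have hpull := condExp_mul_of_stronglyMeasurable_left hFmeas hFHint hHint
    have hHle : H ≤ᵐ[μ] fun ω => 1 + l/m * τhat (n+1) ω := by
      filter_upwards [hbdd (n+1)] with ω hb
      have h1 := abs_le.mp hb
      have hx : -1 ≤ τhat (n+1) ω / m := by
        rw [le_div_iff₀ hm]; linarith
      have hkey := key_exp h0l h1l hx
      show Real.exp (l/m * τhat (n+1) ω - ψ/m^2 * (τhat (n+1) ω)^2) ≤ _
      have e : l/m * τhat (n+1) ω - ψ/m^2 * (τhat (n+1) ω)^2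
          = l * (τhat (n+1) ω / m) - (-Real.log (1-l) - l) * (τhat (n+1) ω / m)^2 := by
        rw [hψdef]; field_simp
      rw [e]
      calc Real.exp _ ≤ 1 + l * (τhat (n+1) ω / m) := hkey
        _ = 1 + l/m * τhat (n+1) ω := by ring
    have h1int : Integrable (fun ω => 1 + l/m * τhat (n+1) ω) μ := by
      exact (integrable_const 1).add ((hint (n+1)).const_mul (l/m))
    have hcondH : μ[H | ℱ n] ≤ᵐ[μ] fun ω => 1 + l/m * τ (n+1) ω := by
      refine (condExp_mono hHint h1int hHle).trans ?_
      have e1 : (fun ω => 1 + l/m * τhat (n+1) ω)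
          = (fun _ => (1:ℝ)) + (l/m) • (τhat (n+1)) := by
        funext ω; simp [smul_eq_mul]
      have h2 := condExp_smul (μ := μ) (m := ℱ n) (l/m) (τhat (n+1))
      have h3 : μ[τhat (n+1)|ℱ n] =ᵐ[μ] τ (n+1) := (hτ (n+1) hi1).symm
      have hadd := condExp_add (μ := μ) (m := ℱ n) (integrable_const (1:ℝ))
        ((hint (n+1)).smul (l/m))
      rw [e1]
      refine hadd.le.trans ?_
      have hc := condExp_const (μ := μ) (ℱ.le n) (1:ℝ)
      filter_upwards [h2, h3] with ω hω2 hω3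
      show (μ[fun _ => (1:ℝ)|ℱ n]) ω + (μ[(l/m) • τhat (n+1)|ℱ n]) ω ≤ _
      rw [hc, hω2]
      show 1 + (l/m) • ((μ[τhat (n+1)|ℱ n]) ω) ≤ _
      rw [hω3, smul_eq_mul]
    -- conclude the supermartingale step
    rw [hsplit]
    refine hpull.le.trans ?_
    filter_upwards [hcondH] with ω hω
    have hF0 : 0 ≤ F ω := mul_nonneg (Real.exp_pos _).le (Real.exp_pos _).le
    have step1 : F ω * (μ[H|ℱ n]) ω ≤ F ω * (1 + l/m * τ (n+1) ω) :=
      mul_le_mul_of_nonneg_left hω hF0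
    have step2 : 1 + l/m * τ (n+1) ω ≤ Real.exp (l/m * τ (n+1) ω) := by
      have := Real.add_one_le_exp (l/m * τ (n+1) ω); linarith
    have step3 : F ω * (1 + l/m * τ (n+1) ω) ≤ F ω * Real.exp (l/m * τ (n+1) ω) :=
      mul_le_mul_of_nonneg_left step2 hF0
    have step4 : F ω * Real.exp (l/m * τ (n+1) ω) = f n ω := by
      show f n ω * Real.exp (-(l/m) * τ (n+1) ω) * Real.exp (l/m * τ (n+1) ω) = f n ω
      rw [mul_assoc, ← Real.exp_add]
      have : -(l/m) * τ (n+1) ω + l/m * τ (n+1) ω = 0 := by ring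
      rw [this, Real.exp_zero, mul_one]
    calc (F * μ[H|ℱ n]) ω = F ω * (μ[H|ℱ n]) ω := rfl
      _ ≤ f n ω := by linarith
  have hsuper : Supermartingale f ℱ μ := supermartingale_nat hfadp hfint hstep
  -- Ville's inequality
  have hpos : ∀ n ω, 0 ≤ f n ω := fun n ω => (Real.exp_pos _).le
  have hf0 : ∀ ω, f 0 ω ≤ 1 := by
    intro ω
    show Real.exp (G 0 ω) ≤ 1
    have : G 0 ω = 0 := by
      show (∑ i ∈ Finset.Icc 1 0, g i ω) = 0
      simp
    rw [this, Real.exp_zero]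
  have hc : (0:ℝ) < 1/α := by positivity
  have hville := ville_ineq hsuper hpos hf0 hc
  rw [one_div_one_div] at hville
  refine le_trans (measure_mono ?_) hville
  rintro ω ⟨n, _hn1, hcond⟩
  refine ⟨n, ?_⟩
  show 1/α ≤ Real.exp (G n ω)
  rw [← Real.exp_log hc, Real.exp_le_exp]
  set T := ∑ i ∈ Finset.Icc 1 n, (τhat i ω - τ i ω) with hT
  set S := ∑ i ∈ Finset.Icc 1 n, (τhat i ω)^2 with hS
  have hGeq : G n ω = l/m * T - ψ/m^2 * S := by
    show (∑ i ∈ Finset.Icc 1 n, g i ω) = _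
    show (∑ i ∈ Finset.Icc 1 n,
      (l/m * (τhat i ω - τ i ω) - ψ/m^2 * (τhat i ω)^2)) = _
    rw [Finset.sum_sub_distrib, ← Finset.mul_sum, ← Finset.mul_sum, hT, hS]
  have hmml : l/m * (m * (m+1)) = 1 := by
    rw [hldef]; field_simp
  have hcoef : l/m * ((m+1)/m * Real.log (1 + 1/m) - 1/m) = ψ/m^2 := by
    rw [hψeq, hldef]; field_simp
  have hmul := mul_le_mul_of_nonneg_left hcond
    (le_of_lt (show (0:ℝ) < l/m by positivity))
  have hexp : l/m * (m * (m+1) * Real.log (1/α)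
        + S * ((m+1)/m * Real.log (1 + 1/m) - 1/m))
      = (l/m * (m * (m+1))) * Real.log (1/α)
        + (l/m * ((m+1)/m * Real.log (1 + 1/m) - 1/m)) * S := by ring
  rw [hexp, hmml, hcoef, one_mul] at hmul
  rw [hGeq]
  linarith
end

section
/- Gaussian confidence sequence: let (Z_j)_{j≥1} be independent standard Gaussian random variables, (σ_j)_{j≥1} real constants, and set S_t = Σ_{j=1}^t σ_j². Then for any η > 0 and α ∈ (0,1), P( for all t ≥ 1, | Σ_{j=1}^t σ_j Z_j | < √( ((S_t η² + 1)/η²) · log( (S_t η² + 1)/α² ) ) ) ≥ 1 − α. -/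
open MeasureTheory ProbabilityTheory Filter Real

set_option maxHeartbeats 1000000

namespace GaussCS

lemma sq_expand (a b z : ℝ) (ha : a ≠ 0) :
    -a * (z - b/(2*a))^2 + b^2/(4*a) = -a * z^2 + b * z := by
  field_simp; ring

lemma integrable_exp_quad {a b : ℝ} (ha : 0 < a) :
    Integrable (fun z : ℝ => Real.exp (-a * z ^ 2 + b * z)) := by
  have h : ∀ z : ℝ, -a * z ^ 2 + b * z = -a * (z - b/(2*a))^2 + b^2/(4*a) :=
    fun z => (sq_expand a b z ha.ne').symm
  simp_rw [h, Real.exp_add]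
  exact ((integrable_exp_neg_mul_sq ha).comp_sub_right (b/(2*a))).mul_const _

lemma integral_exp_quad {a b : ℝ} (ha : 0 < a) :
    ∫ z : ℝ, Real.exp (-a * z ^ 2 + b * z) = Real.sqrt (π / a) * Real.exp (b^2/(4*a)) := by
  have h : ∀ z : ℝ, -a * z ^ 2 + b * z = -a * (z - b/(2*a))^2 + b^2/(4*a) :=
    fun z => (sq_expand a b z ha.ne').symm
  simp_rw [h, Real.exp_add, integral_mul_const]
  rw [integral_sub_right_eq_self (fun z : ℝ => Real.exp (-a * z ^ 2)) (b/(2*a)),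
    integral_gaussian]

lemma gaussianReal_std :
    gaussianReal 0 1 = volume.withDensity
      (fun z => ((gaussianPDFReal 0 1 z).toNNReal : ENNReal)) := by
  rw [gaussianReal_of_var_ne_zero _ one_ne_zero]
  rfl

lemma integral_std_gaussian (g : ℝ → ℝ) :
    ∫ z, g z ∂(gaussianReal 0 1) = ∫ z, gaussianPDFReal 0 1 z * g z := by
  rw [gaussianReal_std, integral_withDensity_eq_integral_smul
    (measurable_gaussianPDFReal 0 1).real_toNNReal g]
  congr 1; ext z
  rw [NNReal.smul_def, smul_eq_mul, Real.coe_toNNReal _ (gaussianPDFReal_nonneg 0 1 z)]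

lemma integrable_std_gaussian_iff (g : ℝ → ℝ) :
    Integrable g (gaussianReal 0 1) ↔
      Integrable (fun z => gaussianPDFReal 0 1 z * g z) volume := by
  rw [gaussianReal_std, integrable_withDensity_iff_integrable_smul
    (measurable_gaussianPDFReal 0 1).real_toNNReal]
  constructor <;> intro h <;> refine h.congr (Filter.Eventually.of_forall fun z => ?_) <;>
    simp only [NNReal.smul_def, smul_eq_mul,
      Real.coe_toNNReal _ (gaussianPDFReal_nonneg 0 1 z)]

lemma gaussianPDFReal_std (z : ℝ) :
    gaussianPDFReal 0 1 z = (Real.sqrt (2 * π))⁻¹ * Real.exp (-z^2/2) := by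
  rw [gaussianPDFReal]
  norm_num

section step

variable {η s A x : ℝ} (hA : 0 < A)

lemma B_pos (hA : 0 < A) : (0:ℝ) < A + s^2*η^2 := by positivity

-- pointwise algebra: pdf(z) * exp(η²(x+sz)²/(2B)) = (√(2π))⁻¹ exp(cx²) exp(-az²+bz)
lemma pointwise_eq (hA : 0 < A) (z : ℝ) :
    gaussianPDFReal 0 1 z * Real.exp (η^2 * (x + s*z)^2 / (2*(A + s^2*η^2)))
      = (Real.sqrt (2 * π))⁻¹ * Real.exp (η^2 * x^2 / (2*(A + s^2*η^2))) *
        Real.exp (-(A/(2*(A + s^2*η^2))) * z^2 + (η^2*s*x/(A + s^2*η^2)) * z) := by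
  have hB : (0:ℝ) < A + s^2*η^2 := B_pos hA
  rw [gaussianPDFReal_std, mul_assoc, ← Real.exp_add, mul_assoc, ← Real.exp_add]
  congr 1
  field_simp
  ring

lemma gauss_step_integrable (hA : 0 < A) :
    Integrable (fun z => Real.exp (η^2 * (x + s*z)^2 / (2*(A + s^2*η^2))))
      (gaussianReal 0 1) := by
  rw [integrable_std_gaussian_iff]
  have hB : (0:ℝ) < A + s^2*η^2 := B_pos hA
  have ha : (0:ℝ) < A/(2*(A + s^2*η^2)) := by positivity
  simp_rw [pointwise_eq hA]
  exact ((integrable_exp_quad ha).const_mul _)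

lemma gauss_step_integral (hA : 0 < A) :
    ∫ z, Real.exp (η^2 * (x + s*z)^2 / (2*(A + s^2*η^2))) ∂(gaussianReal 0 1)
      = Real.sqrt ((A + s^2*η^2)/A) * Real.exp (η^2 * x^2 / (2*A)) := by
  have hB : (0:ℝ) < A + s^2*η^2 := B_pos hA
  have ha : (0:ℝ) < A/(2*(A + s^2*η^2)) := by positivity
  rw [integral_std_gaussian]
  simp_rw [pointwise_eq hA]
  rw [integral_const_mul, integral_exp_quad ha]
  have hπ : (0:ℝ) < π := Real.pi_pos
  have h1 : (Real.sqrt (2*π))⁻¹ * Real.sqrt (π / (A/(2*(A + s^2*η^2))))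
      = Real.sqrt ((A + s^2*η^2)/A) := by
    rw [show π / (A/(2*(A + s^2*η^2))) = (2*π) * ((A + s^2*η^2)/A) by field_simp,
      Real.sqrt_mul (by positivity : (0:ℝ) ≤ 2*π) ((A + s^2*η^2)/A),
      inv_mul_cancel_left₀ (Real.sqrt_ne_zero'.mpr (by positivity))]
  have h2 : (η^2*s*x/(A + s^2*η^2))^2 / (4*(A/(2*(A + s^2*η^2))))
      + η^2*x^2/(2*(A + s^2*η^2)) = η^2*x^2/(2*A) := by
    field_simp
    ring
  rw [mul_mul_mul_comm, h1, ← Real.exp_add,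
    add_comm (η ^ 2 * x ^ 2 / (2 * (A + s ^ 2 * η ^ 2))), h2]

end step

variable {Ω : Type*}

lemma indepFun_of_indep {F m0 : MeasurableSpace Ω} {μ : Measure Ω} {W : Ω → ℝ}
    (hind : Indep F (MeasurableSpace.comap W Real.measurableSpace) μ)
    {E : Type*} [mE : MeasurableSpace E] {Y : Ω → E} (hY : Measurable[F] Y) :
    IndepFun Y W μ :=
  indep_of_indep_of_le_left hind (measurable_iff_comap_le.mp hY)

lemma map_pair_eq {F m0 : MeasurableSpace Ω} {μ : Measure Ω} [IsProbabilityMeasure μ]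
    (hF : F ≤ m0) {W : Ω → ℝ} (hW : Measurable W)
    (hind : Indep F (MeasurableSpace.comap W Real.measurableSpace) μ)
    {E : Type*} [mE : MeasurableSpace E] {Y : Ω → E} (hY : Measurable[F] Y) :
    μ.map (fun ω => (Y ω, W ω)) = (μ.map Y).prod (μ.map W) := by
  have hYm : Measurable Y := hY.mono hF le_rfl
  exact (indepFun_iff_map_prod_eq_prod_map_map hYm.aemeasurable hW.aemeasurable).1
    (indepFun_of_indep hind hY)

lemma condexp_indep_integral {F m0 : MeasurableSpace Ω} {μ : Measure Ω} [IsProbabilityMeasure μ]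
    (hF : F ≤ m0)
    {W : Ω → ℝ} (hW : Measurable W)
    (hind : Indep F (MeasurableSpace.comap W Real.measurableSpace) μ)
    {Y : Ω → ℝ} (hY : Measurable[F] Y)
    {g : ℝ → ℝ → ℝ} (hg : Measurable (Function.uncurry g))
    (hint : Integrable (fun ω => g (Y ω) (W ω)) μ) :
    μ[(fun ω => g (Y ω) (W ω)) | F] =ᵐ[μ] fun ω => ∫ z, g (Y ω) z ∂(μ.map W) := by
  have hYm : Measurable Y := hY.mono hF le_rfl
  set ν := μ.map W with hν
  have hνprob : IsProbabilityMeasure ν := Measure.isProbabilityMeasure_map hW.aemeasurable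
  set G : ℝ → ℝ := fun x => ∫ z, g x z ∂ν with hG
  have hGsm : StronglyMeasurable G :=
    (hg.stronglyMeasurable).integral_prod_right'
  -- joint law with Y
  have hpair : μ.map (fun ω => (Y ω, W ω)) = (μ.map Y).prod ν :=
    map_pair_eq hF hW hind hY
  have hintp : Integrable (Function.uncurry g) ((μ.map Y).prod ν) := by
    rw [← hpair]
    exact (integrable_map_measure hg.stronglyMeasurable.aestronglyMeasurable
      (hYm.prodMk hW).aemeasurable).2 hint
  have hGY : Integrable (fun ω => G (Y ω)) μ := by
    have h1 : Integrable G (μ.map Y) := hintp.integral_prod_left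
    exact (integrable_map_measure hGsm.aestronglyMeasurable hYm.aemeasurable).1 h1
  refine (ae_eq_condExp_of_forall_setIntegral_eq hF hint
    (fun s _ _ => hGY.integrableOn) (fun s hs _ => ?_)
    ((hGsm.comp_measurable hY).aestronglyMeasurable)).symm
  -- set-integral identity
  have hsm0 : MeasurableSet s := hF s hs
  set I : Ω → ℝ := s.indicator (fun _ => (1:ℝ)) with hI
  have hImeas : Measurable[F] I := measurable_const.indicator hs
  set Y2 : Ω → ℝ × ℝ := fun ω => (Y ω, I ω) with hY2
  have hY2meas : Measurable[F] Y2 := hY.prodMk hImeas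
  have hY2m : Measurable Y2 := hY2meas.mono hF le_rfl
  have hpair2 : μ.map (fun ω => (Y2 ω, W ω)) = (μ.map Y2).prod ν :=
    map_pair_eq hF hW hind hY2meas
  set φ : (ℝ × ℝ) × ℝ → ℝ := fun p => p.1.2 * g p.1.1 p.2 with hφ
  have hφm : Measurable φ :=
    (measurable_snd.comp measurable_fst).mul
      (hg.comp ((measurable_fst.comp measurable_fst).prodMk measurable_snd))
  have hIind : ∀ (f : Ω → ℝ), (fun ω => I ω * f ω) = s.indicator f := by
    intro f; ext ω
    by_cases hω : ω ∈ s <;> simp [hI, Set.indicator, hω]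
  have hφint : Integrable φ ((μ.map Y2).prod ν) := by
    rw [← hpair2]
    refine (integrable_map_measure hφm.stronglyMeasurable.aestronglyMeasurable
      (hY2m.prodMk hW).aemeasurable).2 ?_
    have : (fun ω => φ (Y2 ω, W ω)) = s.indicator (fun ω => g (Y ω) (W ω)) := by
      rw [← hIind]
    rw [Function.comp_def, this]
    exact hint.indicator hsm0
  calc ∫ x in s, G (Y x) ∂μ
      = ∫ ω, I ω * G (Y ω) ∂μ := by rw [hIind, integral_indicator hsm0]
    _ = ∫ y, y.2 * G y.1 ∂(μ.map Y2) := by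
        rw [integral_map hY2m.aemeasurable
          (show AEStronglyMeasurable (fun y : ℝ × ℝ => y.2 * G y.1) (μ.map Y2) from
            (measurable_snd.mul (hGsm.measurable.comp measurable_fst)).aestronglyMeasurable)]
    _ = ∫ y, ∫ z, φ (y, z) ∂ν ∂(μ.map Y2) := by
        congr 1; ext y
        rw [hφ]
        simp only
        rw [integral_const_mul]
    _ = ∫ p, φ p ∂((μ.map Y2).prod ν) := (integral_prod φ hφint).symm
    _ = ∫ p, φ p ∂(μ.map (fun ω => (Y2 ω, W ω))) := by rw [hpair2]
    _ = ∫ ω, I ω * g (Y ω) (W ω) ∂μ := by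
        rw [integral_map (hY2m.prodMk hW).aemeasurable
          hφm.stronglyMeasurable.aestronglyMeasurable]
    _ = ∫ x in s, g (Y x) (W x) ∂μ := by rw [hIind, integral_indicator hsm0]

end GaussCS


/-- **Gaussian confidence sequence.** For independent standard Gaussians
`(Z_j)_{j≥1}`, real constants `(σ_j)`, `S_t = Σ_{j=1}^t σ_j²`, any `η > 0` and
`α ∈ (0,1)`:
`P(∀ t ≥ 1, |Σ_{j=1}^t σ_j Z_j| < √(((S_t η² + 1)/η²)·log((S_t η² + 1)/α²))) ≥ 1 − α`. -/
theorem gaussian_confidence_sequence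
    {Ω : Type*} {m0 : MeasurableSpace Ω} {μ : Measure Ω} [IsProbabilityMeasure μ]
    (Z : ℕ → Ω → ℝ) (hZmeas : ∀ j, Measurable (Z j))
    (hindep : iIndepFun Z μ)
    (hgauss : ∀ j, μ.map (Z j) = gaussianReal 0 1)
    (σ : ℕ → ℝ) (η α : ℝ) (hη : 0 < η) (hα : α ∈ Set.Ioo (0 : ℝ) 1) :
    ENNReal.ofReal (1 - α) ≤
      μ {ω | ∀ t : ℕ, 1 ≤ t →
        |∑ j ∈ Finset.Icc 1 t, σ j * Z j ω| <
          Real.sqrt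
            (((∑ j ∈ Finset.Icc 1 t, (σ j) ^ 2) * η ^ 2 + 1) / η ^ 2 *
              Real.log (((∑ j ∈ Finset.Icc 1 t, (σ j) ^ 2) * η ^ 2 + 1) / α ^ 2))} := by
  obtain ⟨hα0, hα1⟩ := hα
  set X : ℕ → Ω → ℝ := fun t ω => ∑ j ∈ Finset.Icc 1 t, σ j * Z j ω with hXdef
  set S : ℕ → ℝ := fun t => ∑ j ∈ Finset.Icc 1 t, (σ j)^2 with hSdef
  have hS0 : ∀ t, 0 ≤ S t := fun t => Finset.sum_nonneg fun j _ => sq_nonneg _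
  set A : ℕ → ℝ := fun t => S t * η^2 + 1 with hAdef
  have hApos : ∀ t, 0 < A t := fun t => by
    have := hS0 t
    show (0:ℝ) < S t * η^2 + 1
    positivity
  have hA1 : ∀ t, 1 ≤ A t := fun t => by
    have := hS0 t
    show (1:ℝ) ≤ S t * η^2 + 1
    nlinarith [sq_nonneg η]
  set M : ℕ → Ω → ℝ :=
    fun t ω => Real.exp (η^2 * (X t ω)^2 / (2 * A t)) / Real.sqrt (A t) with hMdef
  have hXrec : ∀ t ω, X (t+1) ω = X t ω + σ (t+1) * Z (t+1) ω := fun t ω =>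
    Finset.sum_Icc_succ_top (Nat.succ_le_succ (Nat.zero_le t)) _
  have hArec : ∀ t, A (t+1) = A t + (σ (t+1))^2 * η^2 := fun t => by
    rw [hAdef, hSdef]
    simp only
    rw [Finset.sum_Icc_succ_top (Nat.succ_le_succ (Nat.zero_le t))]
    ring
  have hX0 : ∀ ω, X 0 ω = 0 := fun ω => by simp [hXdef]
  have hA0 : A 0 = 1 := by simp [hAdef, hSdef]
  have hM0 : M 0 = fun _ => 1 := by
    funext ω
    rw [hMdef]
    simp only [hX0, hA0]
    norm_num
  -- the filtration
  set V : (t : ℕ) → Ω → ((Finset.Icc 1 t : Finset ℕ) → ℝ) := fun t ω i => Z i ω with hVdef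
  have hVmeas : ∀ t, Measurable (V t) := fun t => measurable_pi_lambda _ fun i => hZmeas i
  set F : ℕ → MeasurableSpace Ω :=
    fun t => MeasurableSpace.comap (V t) MeasurableSpace.pi with hFdef
  have hFle : ∀ t, F t ≤ m0 := fun t => measurable_iff_comap_le.mp (hVmeas t)
  have hmeasF : ∀ (t : ℕ) (g : ((Finset.Icc 1 t : Finset ℕ) → ℝ) → ℝ), Measurable g →
      Measurable[F t] (fun ω => g (V t ω)) := fun t g hg =>
    hg.comp (measurable_iff_comap_le.mpr le_rfl)
  have hFmono : Monotone F := by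
    intro i j hij
    have hsub : ∀ k : (Finset.Icc 1 i : Finset ℕ), ((k : ℕ) ∈ Finset.Icc 1 j) := by
      intro k
      have hk := k.2
      simp only [Finset.mem_Icc] at hk ⊢
      omega
    set R : ((Finset.Icc 1 j : Finset ℕ) → ℝ) → ((Finset.Icc 1 i : Finset ℕ) → ℝ) :=
      fun v k => v ⟨(k : ℕ), hsub k⟩ with hRdef
    have hRmeas : Measurable R := measurable_pi_lambda _ fun k => measurable_pi_apply _
    have h1 : F i = MeasurableSpace.comap (V j) (MeasurableSpace.comap R MeasurableSpace.pi) := by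
      rw [MeasurableSpace.comap_comp]
      rfl
    rw [h1]
    exact MeasurableSpace.comap_mono (measurable_iff_comap_le.mp hRmeas)
  set ℱ : Filtration ℕ m0 := ⟨F, hFmono, hFle⟩ with hFiltdef
  have hXmeasF : ∀ t, Measurable[F t] (X t) := by
    intro t
    have hXeq : X t = fun ω => ∑ i ∈ (Finset.Icc 1 t).attach, σ i * (V t ω i) := by
      funext ω
      rw [hXdef]
      exact (Finset.sum_attach _ fun j => σ j * Z j ω).symm
    rw [hXeq]
    exact hmeasF t _ (Finset.measurable_sum _ fun i _ => (measurable_pi_apply i).const_mul _)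
  have hMmeasF : ∀ t, Measurable[F t] (M t) := fun t =>
    (Real.measurable_exp.comp
      ((((hXmeasF t).pow_const 2).const_mul (η^2)).div_const (2 * A t))).div_const
        (Real.sqrt (A t))
  -- independence
  have hindepF : ∀ t, Indep (F t)
      (MeasurableSpace.comap (Z (t+1)) Real.measurableSpace) μ := by
    intro t
    have hdisj : Disjoint (Finset.Icc 1 t) ({t+1} : Finset ℕ) := by
      simp only [Finset.disjoint_singleton_right, Finset.mem_Icc]
      omega
    have key : IndepFun (fun a (i : (Finset.Icc 1 t : Finset ℕ)) => Z i a)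
        (fun a (i : ({t+1} : Finset ℕ)) => Z i a) μ :=
      hindep.indepFun_finset _ _ hdisj hZmeas
    have key' : Indep (F t)
        (MeasurableSpace.comap (fun a (i : ({t+1} : Finset ℕ)) => Z i a)
          MeasurableSpace.pi) μ := key
    refine indep_of_indep_of_le_right key' ?_
    have hZeq : Z (t+1) = (fun (v : (({t+1} : Finset ℕ) : Type) → ℝ) =>
        v ⟨t+1, Finset.mem_singleton_self _⟩) ∘
        (fun a (i : ({t+1} : Finset ℕ)) => Z i a) := rfl
    rw [hZeq, ← MeasurableSpace.comap_comp]
    exact MeasurableSpace.comap_mono (measurable_iff_comap_le.mp (measurable_pi_apply _))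
  -- martingale step
  have hkey : ∀ t, Integrable (M t) μ →
      Integrable (M (t+1)) μ ∧ M t =ᵐ[μ] μ[M (t+1)|F t] := by
    intro t ih
    set s' := σ (t+1) with hs'def
    set W := Z (t+1) with hWdef
    have hWmeas : Measurable W := hZmeas (t+1)
    have hν : μ.map W = gaussianReal 0 1 := hgauss (t+1)
    set g : ℝ → ℝ → ℝ := fun x z =>
      Real.exp (η^2 * (x + s' * z)^2 / (2 * (A t + s'^2 * η^2))) /
        Real.sqrt (A t + s'^2 * η^2) with hgdef
    have hBA : A (t+1) = A t + s'^2 * η^2 := hArec t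
    have hMg : M (t+1) = fun ω => g (X t ω) (W ω) := by
      funext ω
      show Real.exp (η^2 * (X (t+1) ω)^2 / (2 * A (t+1))) / Real.sqrt (A (t+1))
        = Real.exp (η^2 * (X t ω + s' * W ω)^2 / (2 * (A t + s'^2 * η^2))) /
            Real.sqrt (A t + s'^2 * η^2)
      rw [hXrec t ω, hBA]
    have hgmeas : Measurable (Function.uncurry g) := by
      apply Measurable.div_const
      apply Real.measurable_exp.comp
      apply Measurable.div_const
      apply Measurable.const_mul
      exact (measurable_fst.add (measurable_snd.const_mul s')).pow_const 2
    have hgint_slice : ∀ x, Integrable (g x) (μ.map W) := by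
      intro x
      rw [hν]
      exact (GaussCS.gauss_step_integrable (hApos t)).div_const _
    have hgval : ∀ x, ∫ z, g x z ∂(μ.map W)
        = Real.exp (η^2 * x^2 / (2 * A t)) / Real.sqrt (A t) := by
      intro x
      rw [hν]
      show (∫ z, Real.exp (η^2 * (x + s' * z)^2 / (2 * (A t + s'^2 * η^2))) /
          Real.sqrt (A t + s'^2 * η^2) ∂(gaussianReal 0 1))
        = Real.exp (η^2 * x^2 / (2 * A t)) / Real.sqrt (A t)
      rw [integral_div, GaussCS.gauss_step_integral (hApos t)]
      have h1 : Real.sqrt ((A t + s'^2*η^2)/(A t))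
          = Real.sqrt (A t + s'^2*η^2) / Real.sqrt (A t) := Real.sqrt_div (by positivity) _
      have h2 : Real.sqrt (A t) ≠ 0 := by positivity
      have h3 : Real.sqrt (A t + s'^2*η^2) ≠ 0 := by positivity
      rw [h1]
      field_simp
    have hpair : μ.map (fun ω => (X t ω, W ω)) = (μ.map (X t)).prod (μ.map W) :=
      GaussCS.map_pair_eq (hFle t) hWmeas (hindepF t) (hXmeasF t)
    have hXm : Measurable (X t) := (hXmeasF t).mono (hFle t) le_rfl
    have hgnonneg : ∀ x z, 0 ≤ g x z := fun x z => by
      show (0:ℝ) ≤ Real.exp _ / Real.sqrt _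
      positivity
    have hprob : IsProbabilityMeasure (μ.map (X t)) := Measure.isProbabilityMeasure_map hXm.aemeasurable
    have hprobW : IsProbabilityMeasure (μ.map W) := Measure.isProbabilityMeasure_map hWmeas.aemeasurable
    have hmexp : Measurable (fun x : ℝ => Real.exp (η^2 * x^2 / (2 * A t)) / Real.sqrt (A t)) :=
      (Real.measurable_exp.comp
        (((measurable_id.pow_const 2).const_mul (η^2)).div_const (2 * A t))).div_const _
    have hprod_int : Integrable (fun p : ℝ × ℝ => g p.1 p.2)
        ((μ.map (X t)).prod (μ.map W)) := by
      rw [integrable_prod_iff (by exact hgmeas.aestronglyMeasurable)]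
      constructor
      · exact Filter.Eventually.of_forall fun x => hgint_slice x
      · have heq : (fun x => ∫ z, ‖g x z‖ ∂(μ.map W))
            = fun x => Real.exp (η^2 * x^2 / (2 * A t)) / Real.sqrt (A t) := by
          funext x
          rw [← hgval x]
          congr 1
          funext z
          rw [Real.norm_eq_abs, abs_of_nonneg (hgnonneg x z)]
        rw [heq]
        exact (integrable_map_measure hmexp.aestronglyMeasurable hXm.aemeasurable).2 ih
    have hint1 : Integrable (M (t+1)) μ := by
      rw [hMg]
      have h2 : Integrable (fun p : ℝ × ℝ => g p.1 p.2)
          (μ.map (fun ω => (X t ω, W ω))) := by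
        rw [hpair]
        exact hprod_int
      exact (integrable_map_measure (by exact hgmeas.aestronglyMeasurable)
        (hXm.prodMk hWmeas).aemeasurable).1 h2
    have hcond : μ[(fun ω => g (X t ω) (W ω))|F t]
        =ᵐ[μ] fun ω => ∫ z, g (X t ω) z ∂(μ.map W) :=
      GaussCS.condexp_indep_integral (hFle t) hWmeas (hindepF t) (hXmeasF t) hgmeas
        (by rw [← hMg]; exact hint1)
    have heq2 : (fun ω => ∫ z, g (X t ω) z ∂(μ.map W)) = M t := by
      funext ω
      rw [hgval (X t ω)]
    refine ⟨hint1, ?_⟩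
    have : μ[M (t+1)|F t] =ᵐ[μ] M t := by
      rw [hMg, ← heq2]
      exact hcond
    exact this.symm
  have hMint : ∀ t, Integrable (M t) μ := by
    intro t
    induction t with
    | zero => rw [hM0]; exact integrable_const 1
    | succ t ih => exact (hkey t ih).1
  have hmart : Martingale M ℱ μ :=
    martingale_nat (fun t => (hMmeasF t).stronglyMeasurable) hMint
      (fun t => (hkey t (hMint t)).2)
  -- Doob / Ville
  have hMnonneg : (0 : ℕ → Ω → ℝ) ≤ M := fun t ω =>
    le_of_lt (div_pos (Real.exp_pos _) (Real.sqrt_pos.mpr (hApos t)))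
  set ε : NNReal := Real.toNNReal α⁻¹ with hεdef
  have hεcoe : (ε : ℝ) = α⁻¹ := Real.coe_toNNReal _ (by positivity)
  set E : ℕ → Set Ω := fun n =>
    {ω | (ε:ℝ) ≤ (Finset.range (n+1)).sup' Finset.nonempty_range_add_one fun k => M k ω} with hEdef
  have hdoob : ∀ n, μ (E n) ≤ ENNReal.ofReal α := by
    intro n
    have h1 := maximal_ineq (ε := ε) hmart.submartingale hMnonneg n
    have h2 : ∫ ω in E n, M n ω ∂μ ≤ ∫ ω, M n ω ∂μ :=
      setIntegral_le_integral (hMint n) (Filter.Eventually.of_forall fun ω => hMnonneg n ω)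
    have h3 : ∫ ω, M n ω ∂μ = 1 := by
      have h4 := hmart.setIntegral_eq (Nat.zero_le n)
        (MeasurableSet.univ : MeasurableSet[ℱ 0] Set.univ)
      rw [setIntegral_univ, setIntegral_univ] at h4
      rw [← h4, hM0]
      simp
    have h5 : (ε : ENNReal) * μ (E n) ≤ 1 := by
      rw [← smul_eq_mul]
      refine le_trans h1 ?_
      calc ENNReal.ofReal (∫ ω in E n, M n ω ∂μ)
          ≤ ENNReal.ofReal (∫ ω, M n ω ∂μ) := ENNReal.ofReal_le_ofReal h2
        _ = 1 := by rw [h3, ENNReal.ofReal_one]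
    have h6 : μ (E n) ≤ (ε : ENNReal)⁻¹ :=
      ENNReal.le_inv_iff_mul_le.mpr (by rwa [mul_comm] at h5)
    refine le_trans h6 ?_
    have h7 : (ε : ENNReal) = ENNReal.ofReal α⁻¹ := rfl
    rw [h7, ENNReal.ofReal_inv_of_pos hα0, inv_inv]
  have hEmono : Monotone E := by
    intro i j hij ω hω
    simp only [hEdef, Set.mem_setOf_eq] at hω ⊢
    refine le_trans hω ?_
    apply Finset.sup'_le
    intro k hk
    refine Finset.le_sup' (f := fun k => M k ω) ?_
    simp only [Finset.mem_range] at hk ⊢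
    omega
  have hunion : μ (⋃ n, E n) ≤ ENNReal.ofReal α := by
    rw [hEmono.measure_iUnion]
    exact iSup_le hdoob
  -- the key pointwise implication
  have hkey2 : ∀ t ω, Real.sqrt (A t / η^2 * Real.log (A t / α^2)) ≤ |X t ω| →
      (ε:ℝ) ≤ M t ω := by
    intro t ω hle
    have hA := hApos t
    have hAg1 := hA1 t
    have hL : 0 ≤ Real.log (A t / α^2) := by
      apply Real.log_nonneg
      rw [le_div_iff₀ (by positivity)]
      nlinarith
    have hr2 : A t / η^2 * Real.log (A t / α^2) ≤ (X t ω)^2 := by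
      have hs := Real.sq_sqrt (by positivity : (0:ℝ) ≤ A t / η^2 * Real.log (A t / α^2))
      nlinarith [sq_abs (X t ω), abs_nonneg (X t ω),
        Real.sqrt_nonneg (A t / η^2 * Real.log (A t / α^2))]
    rw [hεcoe]
    show α⁻¹ ≤ Real.exp (η^2 * (X t ω)^2 / (2 * A t)) / Real.sqrt (A t)
    rw [le_div_iff₀ (Real.sqrt_pos.mpr hA)]
    have hsq : α⁻¹ * Real.sqrt (A t) = Real.sqrt (A t / α^2) := by
      rw [Real.sqrt_div hA.le, Real.sqrt_sq hα0.le, div_eq_inv_mul]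
    rw [hsq, ← Real.log_le_iff_le_exp (Real.sqrt_pos.mpr (by positivity)),
      Real.log_sqrt (by positivity)]
    have h6 := mul_le_mul_of_nonneg_left hr2 (sq_nonneg η)
    have h7 : η^2 * (A t/η^2 * Real.log (A t / α^2)) = A t * Real.log (A t/α^2) := by
      field_simp
    rw [h7] at h6
    rw [div_le_div_iff₀ (by norm_num) (by positivity)]
    nlinarith
  -- final assembly
  have hsub : ∀ (T : Set Ω), (∀ ω, ω ∉ T → ∃ t, 1 ≤ t ∧
      Real.sqrt (A t / η^2 * Real.log (A t / α^2)) ≤ |X t ω|) →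
      ENNReal.ofReal (1 - α) ≤ μ T := by
    intro T hT
    have hTc : Tᶜ ⊆ ⋃ n, E n := by
      intro ω hω
      obtain ⟨t, ht, hle⟩ := hT ω hω
      refine Set.mem_iUnion.mpr ⟨t, ?_⟩
      simp only [hEdef, Set.mem_setOf_eq]
      refine le_trans (hkey2 t ω hle) ?_
      exact Finset.le_sup' (f := fun k => M k ω) (Finset.self_mem_range_succ t)
    have hTc2 : μ Tᶜ ≤ ENNReal.ofReal α := le_trans (measure_mono hTc) hunion
    have h1T : (1:ENNReal) ≤ μ T + ENNReal.ofReal α := by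
      calc (1:ENNReal) = μ Set.univ := measure_univ.symm
        _ = μ (T ∪ Tᶜ) := by rw [Set.union_compl_self]
        _ ≤ μ T + μ Tᶜ := measure_union_le _ _
        _ ≤ μ T + ENNReal.ofReal α := add_le_add_right hTc2 _
    calc ENNReal.ofReal (1 - α) = 1 - ENNReal.ofReal α := by
          rw [ENNReal.ofReal_sub _ hα0.le, ENNReal.ofReal_one]
      _ ≤ μ T := tsub_le_iff_right.mpr h1T
  apply hsub
  intro ω hω
  simp only [Set.mem_setOf_eq] at hω
  push_neg at hω
  obtain ⟨t, ht, hle⟩ := hω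
  exact ⟨t, ht, hle⟩
end
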